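/- arXiv:1607.07011 — 4 statements merged into one kernel-verified Lean document; each statement's English description precedes it below -/
import Mathlib

section
/- Let g ≥ 3 be an integer. For almost all positive integers n, l_g(n) ≥ λ_g(n) + λ_g(n)/(8g · ln(g) · λ_g(λ_g(n))); that is, the set of positive integers n failing this inequality has natural density zero (the proportion of such n below x tends to 0 as x → ∞). -/
/-- `IsGAddChain g a r d` says that `a 0 = 1, a 1, …, a r = d` is a `g`-addition chain
for `d`: each term `a i` (for `1 ≤ i ≤ r`) is a sum `a (j 1) + ⋯ + a (j k)` of `k`
earlier terms, where `2 ≤ k ≤ g` and `j 1 ≤ ⋯ ≤ j k ≤ i - 1`. -/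
def IsGAddChain (g : ℕ) (a : ℕ → ℕ) (r : ℕ) (d : ℕ) : Prop :=
  a 0 = 1 ∧ a r = d ∧
  ∀ i, 1 ≤ i → i ≤ r →
    ∃ k, 2 ≤ k ∧ k ≤ g ∧
      ∃ j : Fin k → ℕ, Monotone j ∧ (∀ t, j t ≤ i - 1) ∧
        a i = ∑ t, a (j t)

/-- `gAddChainLength g d` is `l_g(d)`, the length of a shortest `g`-addition chain for `d`. -/
noncomputable def gAddChainLength (g d : ℕ) : ℕ :=
  sInf {r | ∃ a : ℕ → ℕ, IsGAddChain g a r d}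

/-- `nonzeroDigits m d` is `μ_m(d)`, the number of nonzero digits of `d` in base `m`. -/
def nonzeroDigits (m d : ℕ) : ℕ :=
  ((Nat.digits m d).filter (· ≠ 0)).length

section Basics
variable {g : ℕ}

lemma chain_one_le {a : ℕ → ℕ} {r d : ℕ} (h : IsGAddChain g a r d) :
    ∀ i, i ≤ r → 1 ≤ a i := by
  intro i
  induction i using Nat.strong_induction_on with
  | _ i ih =>
    intro hir
    rcases Nat.eq_zero_or_pos i with rfl | hi
    · rw [h.1]
    · obtain ⟨k, hk2, hkg, j, hmono, hjle, hsum⟩ := h.2.2 i hi hir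
      have hterm : ∀ t : Fin k, 1 ≤ a (j t) := by
        intro t
        exact ih (j t) (lt_of_le_of_lt (hjle t) (by omega))
          (le_trans (hjle t) (by omega))
      have : (Finset.univ : Finset (Fin k)).card • 1 ≤ ∑ t, a (j t) :=
        Finset.card_nsmul_le_sum _ _ _ (fun t _ => hterm t)
      simp only [Finset.card_univ, Fintype.card_fin, smul_eq_mul, mul_one] at this
      omega

lemma chain_le_pow {a : ℕ → ℕ} {r d : ℕ} (hg2 : 2 ≤ g) (h : IsGAddChain g a r d) :
    ∀ i, i ≤ r → a i ≤ g ^ i := by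
  intro i
  induction i using Nat.strong_induction_on with
  | _ i ih =>
    intro hir
    rcases Nat.eq_zero_or_pos i with rfl | hi
    · simp [h.1]
    · obtain ⟨k, hk2, hkg, j, hmono, hjle, hsum⟩ := h.2.2 i hi hir
      have hterm : ∀ t : Fin k, a (j t) ≤ g ^ (i - 1) := by
        intro t
        calc a (j t) ≤ g ^ (j t) :=
              ih (j t) (lt_of_le_of_lt (hjle t) (by omega))
                (le_trans (hjle t) (by omega))
          _ ≤ g ^ (i - 1) := Nat.pow_le_pow_right (by omega) (hjle t)
      calc a i = ∑ t, a (j t) := hsum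
        _ ≤ ∑ _t : Fin k, g ^ (i - 1) := Finset.sum_le_sum (fun t _ => hterm t)
        _ = k * g ^ (i - 1) := by simp [Finset.sum_const, mul_comm]
        _ ≤ g * g ^ (i - 1) := Nat.mul_le_mul_right _ hkg
        _ = g ^ i := by
            rw [← pow_succ']
            congr 1
            omega

lemma chain_exists (hg : 3 ≤ g) : ∀ n, 1 ≤ n → ∃ r a, IsGAddChain g a r n := by
  intro n
  induction n using Nat.strong_induction_on with
  | _ n ih =>
    intro hn
    rcases eq_or_lt_of_le hn with h1 | h2
    · exact ⟨0, fun _ => 1, rfl, h1.symm ▸ rfl, fun i hi hir => by omega⟩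
    · -- n ≥ 2
      obtain ⟨r, a, ha⟩ := ih (n / 2) (by omega) (by omega)
      refine ⟨r + 1, fun i => if i = r + 1 then n else a i, ?_, by simp, ?_⟩
      · simpa using ha.1
      intro i hi hir
      rcases Nat.lt_or_ge i (r + 1) with hlt | hge
      · obtain ⟨k, hk2, hkg, j, hmono, hjle, hsum⟩ := ha.2.2 i hi (by omega)
        refine ⟨k, hk2, hkg, j, hmono, hjle, ?_⟩
        show (if i = r + 1 then n else a i) = ∑ t : Fin k, (if j t = r + 1 then n else a (j t))
        rw [if_neg (Nat.ne_of_lt hlt), hsum]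
        apply Finset.sum_congr rfl
        intro t _
        have : j t ≠ r + 1 := by have := hjle t; omega
        rw [if_neg this]
      · have hieq : i = r + 1 := by omega
        subst hieq
        rcases Nat.even_or_odd n with he | ho
        · refine ⟨2, le_refl _, by omega, fun _ => r, monotone_const, fun t => by show r ≤ r + 1 - 1; omega, ?_⟩
          show (if r + 1 = r + 1 then n else a (r+1)) = ∑ _t : Fin 2, (if r = r + 1 then n else a r)
          have hrne : r ≠ r + 1 := by omega
          rw [if_pos rfl, Fin.sum_univ_two, if_neg hrne, ha.2.1]
          obtain ⟨m, hm⟩ := he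
          omega
        · refine ⟨3, by omega, hg, fun t => if (t : ℕ) = 0 then 0 else r, ?_,
            fun t => by dsimp only; split <;> omega, ?_⟩
          · intro s t hst
            dsimp only
            rcases Nat.eq_zero_or_pos (s : ℕ) with hs | hs
            · simp [hs]
            · have : (s : ℕ) ≠ 0 := by omega
              have ht : (t : ℕ) ≠ 0 := by
                have : (s : ℕ) ≤ (t : ℕ) := hst
                omega
              simp [this, ht]
          · show (if r + 1 = r + 1 then n else a (r+1)) = _
            rw [if_pos rfl, Fin.sum_univ_three]
            have h0 : ((0 : Fin 3) : ℕ) = 0 := rfl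
            have h1 : ((1 : Fin 3) : ℕ) = 1 := rfl
            have h2 : ((2 : Fin 3) : ℕ) = 2 := rfl
            simp only [h0, h1, h2, if_pos rfl]
            norm_num
            rw [ha.1, ha.2.1]
            obtain ⟨m, hm⟩ := ho
            omega

lemma chainLength_spec (hg : 3 ≤ g) {n : ℕ} (hn : 1 ≤ n) :
    ∃ a, IsGAddChain g a (gAddChainLength g n) n := by
  have hne : {r | ∃ a : ℕ → ℕ, IsGAddChain g a r n}.Nonempty := by
    obtain ⟨r, a, ha⟩ := chain_exists hg n hn
    exact ⟨r, a, ha⟩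
  exact Nat.sInf_mem hne

lemma log_le_chainLength (hg : 3 ≤ g) {n : ℕ} (hn : 1 ≤ n) :
    Nat.log g n ≤ gAddChainLength g n := by
  obtain ⟨a, ha⟩ := chainLength_spec hg hn
  have := chain_le_pow (by omega) ha _ (le_refl _)
  rw [ha.2.1] at this
  calc Nat.log g n ≤ Nat.log g (g ^ gAddChainLength g n) := Nat.log_mono_right this
    _ = gAddChainLength g n := Nat.log_pow (by omega) _

end Basics

/-- A sorted (strictly increasing) `g`-chain structure, with value-based summands. -/
def GoodChain (g q : ℕ) (b : ℕ → ℕ) : Prop :=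
  b 0 = 1 ∧ (∀ i j, i < j → j ≤ q → b i < b j) ∧
  ∀ i, 1 ≤ i → i ≤ q →
    ∃ k, 2 ≤ k ∧ k ≤ g ∧ ∃ c : Fin k → ℕ,
      (∀ t, ∃ jj, jj < i ∧ b jj = c t) ∧ b i = ∑ t, c t

lemma goodChain_exists {g : ℕ} (hg : 3 ≤ g) {a : ℕ → ℕ} {r n : ℕ}
    (h : IsGAddChain g a r n) (hn : 2 ≤ n) :
    ∃ q, q ≤ r ∧ 1 ≤ q ∧ ∃ b, GoodChain g q b ∧ b q = n := by
  classical
  set S : Finset ℕ := ((Finset.range (r + 1)).image a).filter (· ≤ n) with hS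
  have hmemS : ∀ x, x ∈ S ↔ (∃ i ≤ r, a i = x) ∧ x ≤ n := by
    intro x
    simp [hS, Finset.mem_filter, Finset.mem_image, Finset.mem_range, Nat.lt_succ_iff]
  have h1S : (1 : ℕ) ∈ S := (hmemS 1).mpr ⟨⟨0, Nat.zero_le _, h.1⟩, by omega⟩
  have hnS : n ∈ S := (hmemS n).mpr ⟨⟨r, le_refl _, h.2.1⟩, le_refl _⟩
  have hone : ∀ x ∈ S, 1 ≤ x := by
    intro x hx
    obtain ⟨⟨i, hi, rfl⟩, -⟩ := (hmemS x).mp hx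
    exact chain_one_le h i hi
  have hcard : 1 ≤ S.card := Finset.card_pos.mpr ⟨1, h1S⟩
  set c := S.card with hc
  have hcr : c ≤ r + 1 :=
    le_trans (Finset.card_filter_le _ _) (le_trans (Finset.card_image_le) (by simp))
  set emb := S.orderEmbOfFin (rfl : S.card = c) with hemb
  set b : ℕ → ℕ := fun i => if hi : i < c then emb ⟨i, hi⟩ else n + i + 2 with hb
  have hbval : ∀ i (hi : i < c), b i = emb ⟨i, hi⟩ := by
    intro i hi; simp [hb, hi]
  have hbmem : ∀ i, i < c → b i ∈ S := by
    intro i hi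
    rw [hbval i hi]
    exact Finset.orderEmbOfFin_mem S rfl _
  have hbmono : ∀ i j, i < j → j < c → b i < b j := by
    intro i j hij hj
    rw [hbval i (lt_trans hij hj), hbval j hj]
    exact (OrderEmbedding.lt_iff_lt emb).mpr (by exact_mod_cast hij)
  -- b 0 = 1
  have hmin : S.min' ⟨1, h1S⟩ = 1 :=
    le_antisymm (Finset.min'_le _ _ h1S) (Finset.le_min' _ _ _ hone)
  have hb0 : b 0 = 1 := by
    rw [hbval 0 (by omega)]
    rw [show (⟨0, by omega⟩ : Fin c) = ⟨0, by omega⟩ from rfl]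
    rw [Finset.orderEmbOfFin_zero rfl (by omega)]
    exact hmin
  -- b (c-1) = n
  have hmax : S.max' ⟨1, h1S⟩ = n := by
    apply le_antisymm
    · apply Finset.max'_le
      intro y hy
      exact ((hmemS y).mp hy).2
    · exact Finset.le_max' _ _ hnS
  have hbq : b (c - 1) = n := by
    rw [hbval (c - 1) (by omega)]
    rw [Finset.orderEmbOfFin_last rfl (by omega)]
    exact hmax
  -- surjectivity onto S
  have hsurj : ∀ y ∈ S, ∃ j, j < c ∧ b j = y := by
    intro y hy
    have : y ∈ Set.range emb := by
      rw [Finset.range_orderEmbOfFin]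
      exact hy
    obtain ⟨j, hj⟩ := this
    exact ⟨j, j.isLt, by rw [hbval j j.isLt]; simpa using hj⟩
  refine ⟨c - 1, by omega, ?_, b, ⟨hb0, ?_, ?_⟩, hbq⟩
  · -- 1 ≤ c - 1 : since b 0 = 1 ≠ n = b (c-1)
    rcases Nat.lt_or_ge (c - 1) 1 with h1 | h1
    · exfalso
      have : c - 1 = 0 := by omega
      rw [this] at hbq
      omega
    · exact h1
  · intro i j hij hj
    exact hbmono i j hij (by omega)
  · intro i hi hiq
    have hic : i < c := by omega
    have hbiS : b i ∈ S := hbmem i hic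
    obtain ⟨⟨i₀, hi₀r, hai₀⟩, hbin⟩ := (hmemS (b i)).mp hbiS
    have hbigt1 : 1 < b i := by
      rw [← hb0]
      exact hbmono 0 i (by omega) hic
    have hi₀pos : 1 ≤ i₀ := by
      rcases Nat.eq_zero_or_pos i₀ with rfl | h
      · rw [h.1] at hai₀; omega
      · exact h
    obtain ⟨k, hk2, hkg, j, hmono, hjle, hsum⟩ := h.2.2 i₀ hi₀pos hi₀r
    refine ⟨k, hk2, hkg, fun t => a (j t), ?_, by rw [← hai₀]; exact hsum⟩
    intro t
    -- each summand is < b i and belongs to S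
    have hjtr : j t ≤ r := le_trans (hjle t) (by omega)
    have hterm1 : 1 ≤ a (j t) := chain_one_le h _ hjtr
    have hlt : a (j t) < b i := by
      have hsplit : ∑ s, a (j s) = a (j t) + ∑ s ∈ Finset.univ.erase t, a (j s) :=
        (Finset.add_sum_erase _ _ (Finset.mem_univ t)).symm
      have hcard1 : 1 ≤ (Finset.univ.erase t).card := by
        rw [Finset.card_erase_of_mem (Finset.mem_univ t), Finset.card_univ,
          Fintype.card_fin]
        omega
      have hrest : 1 ≤ ∑ s ∈ Finset.univ.erase t, a (j s) := by
        have : (Finset.univ.erase t).card • 1 ≤ ∑ s ∈ Finset.univ.erase t, a (j s) :=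
          Finset.card_nsmul_le_sum _ _ _
            (fun s _ => chain_one_le h _ (le_trans (hjle s) (by omega)))
        simpa using le_trans (by simpa using hcard1) this
      have h2 : a (j t) + 1 ≤ ∑ s, a (j s) := by omega
      rw [← hsum, hai₀] at h2
      exact Nat.lt_of_lt_of_le (Nat.lt_succ_self _) h2
    have hmemS' : a (j t) ∈ S := (hmemS _).mpr ⟨⟨j t, hjtr, rfl⟩, by omega⟩
    obtain ⟨jj, hjj, hbjj⟩ := hsurj _ hmemS'
    refine ⟨jj, ?_, hbjj⟩
    -- b jj < b i ⇒ jj < i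
    rcases Nat.lt_or_ge jj i with h' | h'
    · exact h'
    · exfalso
      rcases Nat.eq_or_lt_of_le h' with rfl | h''
      · omega
      · have := hbmono i jj h'' hjj
        omega

/-- number of deviant slots at step `i` -/
def mOf (g : ℕ) (content : ℕ → ℕ → ℕ) (i : ℕ) : ℕ :=
  ((Finset.range g).filter (fun t => content i t ≠ i)).card

lemma mOf_le (g : ℕ) (content : ℕ → ℕ → ℕ) (i : ℕ) : mOf g content i ≤ g := by
  apply le_trans (Finset.card_filter_le _ _)
  simp

lemma goodChain_mono_le {g q : ℕ} {b : ℕ → ℕ} (hgood : GoodChain g q b) :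
    ∀ u v, u ≤ v → v ≤ q → b u ≤ b v := by
  intro u v huv hvq
  rcases eq_or_lt_of_le huv with rfl | h
  · exact le_refl _
  · exact le_of_lt (hgood.2.1 u v h hvq)

lemma descriptor_exists {g q : ℕ} {b : ℕ → ℕ} (hgood : GoodChain g q b) :
    ∃ content : ℕ → ℕ → ℕ,
      (∀ i t, 1 ≤ i → i ≤ q → content i t ≤ i) ∧
      (∀ i, 1 ≤ i → i ≤ q →
        b i = ∑ t ∈ Finset.range g,
          (if content i t = 0 then 0 else b (content i t - 1))) := by
  classical
  have key : ∀ i, ∃ ct : ℕ → ℕ, 1 ≤ i → i ≤ q →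
      (∀ t, ct t ≤ i) ∧
      (b i = ∑ t ∈ Finset.range g, (if ct t = 0 then 0 else b (ct t - 1))) := by
    intro i
    by_cases hi : 1 ≤ i ∧ i ≤ q
    · obtain ⟨k, hk2, hkg, c, hc, hsum⟩ := hgood.2.2 i hi.1 hi.2
      refine ⟨fun t => if ht : t < k then Classical.choose (hc ⟨t, ht⟩) + 1 else 0,
        fun _ _ => ⟨?_, ?_⟩⟩
      · intro t
        by_cases ht : t < k
        · simp only [dif_pos ht]
          have := (Classical.choose_spec (hc ⟨t, ht⟩)).1
          omega
        · simp [dif_neg ht]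
      · have hsplit : Finset.range g = Finset.range k ∪ Finset.Ico k g := by
          rw [Finset.range_eq_Ico, Finset.range_eq_Ico]
          exact (Finset.Ico_union_Ico_eq_Ico (Nat.zero_le _) hkg).symm
        rw [hsplit, Finset.sum_union (by
          rw [Finset.range_eq_Ico]
          exact Finset.Ico_disjoint_Ico_consecutive 0 k g)]
        have hzero : ∀ t ∈ Finset.Ico k g,
            (if (if ht : t < k then Classical.choose (hc ⟨t, ht⟩) + 1 else 0) = 0 then 0
              else b ((if ht : t < k then Classical.choose (hc ⟨t, ht⟩) + 1 else 0) - 1)) = 0 := by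
          intro t ht
          have : ¬ t < k := by simp at ht; omega
          simp [dif_neg this]
        rw [Finset.sum_eq_zero hzero, add_zero, hsum]
        rw [← Fin.sum_univ_eq_sum_range (fun t =>
          (if (if ht : t < k then Classical.choose (hc ⟨t, ht⟩) + 1 else 0) = 0 then 0
            else b ((if ht : t < k then Classical.choose (hc ⟨t, ht⟩) + 1 else 0) - 1))) k]
        apply Finset.sum_congr rfl
        intro t _
        have ht : (t : ℕ) < k := t.isLt
        simp only [dif_pos ht, Nat.add_sub_cancel]
        have hspec := Classical.choose_spec (hc ⟨(t : ℕ), ht⟩)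
        simp only [if_neg (Nat.succ_ne_zero _)]
        rw [hspec.2]
    · exact ⟨fun _ => 0, fun h1 h2 => absurd ⟨h1, h2⟩ hi⟩
  choose content hcontent using key
  exact ⟨content, fun i t h1 h2 => (hcontent i h1 h2).1 t,
    fun i h1 h2 => (hcontent i h1 h2).2⟩

lemma step_bounds {g q : ℕ} {b : ℕ → ℕ} {content : ℕ → ℕ → ℕ}
    (hgood : GoodChain g q b)
    (hrange : ∀ i t, 1 ≤ i → i ≤ q → content i t ≤ i)
    (hrec : ∀ i, 1 ≤ i → i ≤ q →
      b i = ∑ t ∈ Finset.range g,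
        (if content i t = 0 then 0 else b (content i t - 1))) :
    (∀ i, 1 ≤ i → i ≤ q → b i ≤ g * b (i - 1)) ∧
    (∀ i, 2 ≤ i → i ≤ q →
      b i ≤ (g - mOf g content i) * b (i - 1) + (mOf g content i) * b (i - 2)) := by
  have hmono := goodChain_mono_le hgood
  constructor
  · intro i h1 h2
    rw [hrec i h1 h2]
    calc ∑ t ∈ Finset.range g, (if content i t = 0 then 0 else b (content i t - 1))
        ≤ ∑ _t ∈ Finset.range g, b (i - 1) := by
          apply Finset.sum_le_sum
          intro t _
          split
          · exact Nat.zero_le _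
          · apply hmono _ _ (by have := hrange i t h1 h2; omega) (by omega)
      _ = g * b (i - 1) := by simp [mul_comm]
  · intro i h2 hq
    have h1 : 1 ≤ i := by omega
    rw [hrec i h1 hq]
    rw [← Finset.sum_filter_add_sum_filter_not (Finset.range g)
      (fun t => content i t = i)]
    have hA : ∑ t ∈ (Finset.range g).filter (fun t => content i t = i),
        (if content i t = 0 then 0 else b (content i t - 1))
        ≤ (g - mOf g content i) * b (i - 1) := by
      have hcard : ((Finset.range g).filter (fun t => content i t = i)).card
          = g - mOf g content i := by
        have := Finset.card_filter_add_card_filter_not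
          (s := Finset.range g) (p := fun t => content i t = i)
        simp only [Finset.card_range] at this
        unfold mOf
        have h' : ((Finset.range g).filter (fun t => ¬ content i t = i)).card =
            ((Finset.range g).filter (fun t => content i t ≠ i)).card := rfl
        omega
      calc ∑ t ∈ (Finset.range g).filter (fun t => content i t = i),
            (if content i t = 0 then 0 else b (content i t - 1))
          ≤ ∑ _t ∈ (Finset.range g).filter (fun t => content i t = i), b (i - 1) := by
            apply Finset.sum_le_sum
            intro t ht
            have hti : content i t = i := (Finset.mem_filter.mp ht).2
            rw [if_neg (by omega)]
            apply hmono _ _ (by omega) (by omega)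
        _ = (g - mOf g content i) * b (i - 1) := by
            rw [Finset.sum_const, hcard, smul_eq_mul]
    have hB : ∑ t ∈ (Finset.range g).filter (fun t => ¬ content i t = i),
        (if content i t = 0 then 0 else b (content i t - 1))
        ≤ (mOf g content i) * b (i - 2) := by
      calc ∑ t ∈ (Finset.range g).filter (fun t => ¬ content i t = i),
            (if content i t = 0 then 0 else b (content i t - 1))
          ≤ ∑ _t ∈ (Finset.range g).filter (fun t => ¬ content i t = i), b (i - 2) := by
            apply Finset.sum_le_sum
            intro t ht
            have hti : content i t ≠ i := (Finset.mem_filter.mp ht).2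
            split
            · exact Nat.zero_le _
            · have := hrange i t h1 hq
              apply hmono _ _ (by omega) (by omega)
        _ = (mOf g content i) * b (i - 2) := by
            rw [Finset.sum_const, smul_eq_mul]
            rfl
    omega

lemma log_three_halves : (2/5 : ℝ) ≤ Real.log 3 - Real.log 2 := by
  rw [← Real.log_div (by norm_num) (by norm_num)]
  apply (Real.le_log_iff_exp_le (by norm_num)).mpr
  have h5 : Real.exp (2/5) ^ (5 : ℕ) = Real.exp 2 := by
    rw [← Real.exp_nat_mul]
    norm_num
  have he : Real.exp 2 ≤ (3/2 : ℝ) ^ (5 : ℕ) := by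
    have h1 : Real.exp 2 = Real.exp 1 ^ (2 : ℕ) := by
      rw [← Real.exp_nat_mul]; norm_num
    have := Real.exp_one_lt_d9
    rw [h1]
    nlinarith [Real.exp_pos 1]
  apply le_of_pow_le_pow_left₀ (n := 5) (by norm_num) (by norm_num)
  rw [h5]
  exact he

lemma sum_m_bound {g q : ℕ} {b : ℕ → ℕ} {m : ℕ → ℕ} (hg : 3 ≤ g) (hq : 1 ≤ q)
    (hb0 : b 0 = 1)
    (hpos : ∀ i, i ≤ q → 1 ≤ b i)
    (H1 : ∀ i, 1 ≤ i → i ≤ q → b i ≤ g * b (i - 1))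
    (H2 : ∀ i, 2 ≤ i → i ≤ q → b i ≤ (g - m i) * b (i - 1) + m i * b (i - 2))
    (H3 : ∀ i, m i ≤ g) :
    (∑ i ∈ Finset.Icc 2 q, (m i : ℝ)) ≤
      (9/2) * g * (q * Real.log g - Real.log (b q)) := by
  set P : ℕ → ℝ := fun i => Real.log g - (Real.log (b i) - Real.log (b (i - 1))) with hP
  have hbpos : ∀ i, i ≤ q → (0 : ℝ) < (b i : ℝ) := by
    intro i hi; exact_mod_cast hpos i hi
  have hgpos : (0 : ℝ) < (g : ℝ) := by positivity
  have hP0 : ∀ i, 1 ≤ i → i ≤ q → 0 ≤ P i := by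
    intro i h1 h2
    have h := H1 i h1 h2
    have : Real.log (b i) ≤ Real.log g + Real.log (b (i - 1)) := by
      rw [← Real.log_mul (by positivity) (ne_of_gt (hbpos (i-1) (by omega)))]
      apply Real.log_le_log (hbpos i h2)
      exact_mod_cast h
    simp only [hP]
    linarith
  have hPsum : ∑ i ∈ Finset.Icc 1 q, P i = q * Real.log g - Real.log (b q) := by
    have htel : ∑ i ∈ Finset.Icc 1 q, (Real.log (b i) - Real.log (b (i - 1)))
        = Real.log (b q) := by
      rw [show Finset.Icc 1 q = Finset.Ico 1 (q + 1) from (Finset.Ico_add_one_right_eq_Icc 1 q).symm]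
      rw [Finset.sum_Ico_eq_sum_range]
      have : ∀ j ∈ Finset.range (q + 1 - 1),
          (Real.log (b (1 + j)) - Real.log (b (1 + j - 1)))
          = (fun x => Real.log (b x)) (j + 1) - (fun x => Real.log (b x)) j := by
        intro j _
        have e2 : 1 + j - 1 = j := by omega
        have e1 : 1 + j = j + 1 := by omega
        rw [e2, e1]
      rw [Finset.sum_congr rfl this, Finset.sum_range_sub (fun x => Real.log (b x))]
      simp [hb0]
    have : ∑ i ∈ Finset.Icc 1 q, P i
        = (Finset.Icc 1 q).card * Real.log g
          - ∑ i ∈ Finset.Icc 1 q, (Real.log (b i) - Real.log (b (i - 1))) := by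
      rw [Finset.sum_sub_distrib, Finset.sum_const, nsmul_eq_mul]
    rw [this, htel, Nat.card_Icc]
    norm_num
  -- key pointwise bound
  have hkey : ∀ i, 2 ≤ i → i ≤ q → (m i : ℝ) ≤ 2 * g * P i + (5/2) * g * P (i - 1) := by
    intro i h2 hiq
    have h1 : 1 ≤ i := by omega
    have hPi1 : 0 ≤ P (i - 1) := hP0 (i - 1) (by omega) (by omega)
    have hPi : 0 ≤ P i := hP0 i h1 hiq
    by_cases hcase : 2 * b (i - 2) ≤ b (i - 1)
    · -- m i ≤ 2 g P i
      have hm : (m i : ℝ) ≤ 2 * g * P i := by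
        have hstep : (b i : ℝ) ≤ (g - (m i : ℝ) / 2) * b (i - 1) := by
          have hcast : ((g - m i : ℕ) : ℝ) = (g : ℝ) - m i := by
            have := H3 i; push_cast [Nat.cast_sub this]; ring
          have h := H2 i h2 hiq
          have hr : (b i : ℝ) ≤ ((g - m i : ℕ) : ℝ) * b (i - 1) + m i * b (i - 2) := by
            exact_mod_cast h
          have hc : (b (i - 2) : ℝ) ≤ (b (i - 1) : ℝ) / 2 := by
            have : (2 * b (i - 2) : ℝ) ≤ b (i - 1) := by exact_mod_cast hcase
            linarith
          rw [hcast] at hr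
          have hmnn : (0:ℝ) ≤ (m i : ℝ) := by positivity
          nlinarith
        have hgm : (0 : ℝ) < (g : ℝ) - (m i : ℝ) / 2 := by
          have := H3 i
          have : (m i : ℝ) ≤ g := by exact_mod_cast this
          linarith
        have hlog1 : Real.log (b i) - Real.log (b (i - 1)) ≤
            Real.log ((g : ℝ) - (m i : ℝ) / 2) := by
          have := Real.log_le_log (hbpos i hiq) hstep
          rw [Real.log_mul (ne_of_gt hgm) (ne_of_gt (hbpos (i-1) (by omega)))] at this
          linarith
        have hlog2 : Real.log ((g : ℝ) - (m i : ℝ) / 2) ≤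
            Real.log g - (m i : ℝ) / (2 * g) := by
          have hx : (0:ℝ) < ((g : ℝ) - (m i : ℝ) / 2) / g := by positivity
          have := Real.log_le_sub_one_of_pos hx
          rw [Real.log_div (ne_of_gt hgm) (ne_of_gt hgpos)] at this
          have heq : ((g : ℝ) - (m i : ℝ) / 2) / g - 1 = - ((m i : ℝ) / (2 * g)) := by
            field_simp
            ring
          rw [heq] at this
          linarith
        have : (m i : ℝ) / (2 * g) ≤ P i := by
          simp only [hP]
          linarith
        calc (m i : ℝ) = 2 * g * ((m i : ℝ) / (2 * g)) := by field_simp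
          _ ≤ 2 * g * P i := by
              apply mul_le_mul_of_nonneg_left this (by positivity)
      have h5 : (0:ℝ) ≤ (5/2) * g * P (i - 1) := by
        apply mul_le_mul_of_nonneg_left hPi1 (by positivity) |>.trans_eq' (by ring)
      exact hm.trans (le_add_of_nonneg_right h5)
    · -- P (i-1) ≥ log(3/2) ≥ 2/5
      have hψ : Real.log (b (i-1)) - Real.log (b (i - 1 - 1)) ≤ Real.log 2 := by
        have hlt : (b (i - 1) : ℝ) ≤ 2 * b (i - 2) := by
          have : b (i-1) < 2 * b (i - 2) := by omega
          exact_mod_cast le_of_lt this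
        have h22 : (i - 1 - 1) = i - 2 := by omega
        rw [h22]
        have := Real.log_le_log (hbpos (i-1) (by omega)) hlt
        rw [Real.log_mul (by norm_num) (ne_of_gt (hbpos (i-2) (by omega)))] at this
        linarith
      have hPbig : (2/5 : ℝ) ≤ P (i - 1) := by
        have hg3 : Real.log 3 ≤ Real.log g := by
          apply Real.log_le_log (by norm_num)
          exact_mod_cast hg
        have := log_three_halves
        simp only [hP]
        linarith
      have hmg : (m i : ℝ) ≤ g := by exact_mod_cast H3 i
      calc (m i : ℝ) ≤ (g : ℝ) := hmg
        _ = (5/2) * g * (2/5) := by ring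
        _ ≤ (5/2) * g * P (i - 1) := by
            apply mul_le_mul_of_nonneg_left hPbig (by positivity)
        _ ≤ 2 * g * P i + (5/2) * g * P (i - 1) := by
            have h5 : (0:ℝ) ≤ 2 * g * P i := by
              apply mul_le_mul_of_nonneg_left hPi (by positivity) |>.trans_eq' (by ring)
            exact le_add_of_nonneg_left h5
  -- sum up
  have hsum1 : ∑ i ∈ Finset.Icc 2 q, P i ≤ ∑ i ∈ Finset.Icc 1 q, P i := by
    apply Finset.sum_le_sum_of_subset_of_nonneg
    · intro x hx
      simp only [Finset.mem_Icc] at *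
      omega
    · intro i hi _
      simp only [Finset.mem_Icc] at hi
      exact hP0 i hi.1 hi.2
  have hsum2 : ∑ i ∈ Finset.Icc 2 q, P (i - 1) ≤ ∑ i ∈ Finset.Icc 1 q, P i := by
    have himg : ∑ i ∈ (Finset.Icc 2 q).image (fun x => x - 1), P i
        = ∑ i ∈ Finset.Icc 2 q, P (i - 1) := by
      apply Finset.sum_image
      intro x hx y hy hxy
      simp only [Finset.mem_coe, Finset.mem_Icc] at hx hy hxy
      omega
    rw [← himg]
    apply Finset.sum_le_sum_of_subset_of_nonneg
    · intro x hx
      simp only [Finset.mem_image, Finset.mem_Icc] at hx ⊢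
      obtain ⟨y, hy, rfl⟩ := hx
      omega
    · intro i hi _
      simp only [Finset.mem_Icc] at hi
      exact hP0 i hi.1 hi.2
  calc ∑ i ∈ Finset.Icc 2 q, (m i : ℝ)
      ≤ ∑ i ∈ Finset.Icc 2 q, (2 * g * P i + (5/2) * g * P (i - 1)) := by
        apply Finset.sum_le_sum
        intro i hi
        simp only [Finset.mem_Icc] at hi
        exact hkey i hi.1 hi.2
    _ = 2 * g * (∑ i ∈ Finset.Icc 2 q, P i)
        + (5/2) * g * (∑ i ∈ Finset.Icc 2 q, P (i - 1)) := by
        rw [Finset.sum_add_distrib, Finset.mul_sum, Finset.mul_sum]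
    _ ≤ 2 * g * (∑ i ∈ Finset.Icc 1 q, P i) + (5/2) * g * (∑ i ∈ Finset.Icc 1 q, P i) := by
        have h1 : (0:ℝ) ≤ 2 * g := by positivity
        have h2 : (0:ℝ) ≤ (5/2) * g := by positivity
        nlinarith
    _ = (9/2) * g * (q * Real.log g - Real.log (b q)) := by
        rw [hPsum]; ring

noncomputable def devOf (g q : ℕ) (content : ℕ → ℕ → ℕ) : Finset (ℕ × ℕ) := by
  classical
  exact (Finset.Icc 1 q).biUnion (fun i =>
    ((Finset.range g).filter (fun t => content i t ≠ i)).image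
      (fun t => (i * g + t, content i t)))

lemma encode_inj {g i i' t t' : ℕ} (ht : t < g) (ht' : t' < g)
    (h : i * g + t = i' * g + t') : i = i' ∧ t = t' := by
  have hg : 0 < g := by omega
  have h1 : (i * g + t) / g = i := by
    rw [mul_comm, Nat.mul_add_div hg, Nat.div_eq_of_lt ht, add_zero]
  have h2 : (i' * g + t') / g = i' := by
    rw [mul_comm, Nat.mul_add_div hg, Nat.div_eq_of_lt ht', add_zero]
  have : i = i' := by rw [← h1, ← h2, h]
  constructor
  · exact this
  · subst this
    omega

lemma devOf_card_le (g q : ℕ) (content : ℕ → ℕ → ℕ) :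
    (devOf g q content).card ≤ ∑ i ∈ Finset.Icc 1 q, mOf g content i := by
  classical
  apply le_trans (Finset.card_biUnion_le)
  apply Finset.sum_le_sum
  intro i _
  exact Finset.card_image_le

lemma devOf_mem {g q : ℕ} {content : ℕ → ℕ → ℕ} {i t y : ℕ}
    (hi1 : 1 ≤ i) (hiq : i ≤ q) (ht : t < g) :
    (i * g + t, y) ∈ devOf g q content ↔ (content i t ≠ i ∧ y = content i t) := by
  classical
  unfold devOf
  simp only [Finset.mem_biUnion, Finset.mem_image, Finset.mem_filter,
    Finset.mem_range, Finset.mem_Icc, Prod.mk.injEq]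
  constructor
  · rintro ⟨i', ⟨hi'1, hi'q⟩, t', ⟨ht', hne⟩, heq, hy⟩
    obtain ⟨rfl, rfl⟩ := encode_inj ht' ht heq
    exact ⟨hne, hy.symm⟩
  · rintro ⟨hne, rfl⟩
    exact ⟨i, ⟨hi1, hiq⟩, t, ⟨ht, hne⟩, rfl, rfl⟩

lemma devOf_subset {g q : ℕ} {content : ℕ → ℕ → ℕ}
    (hrange : ∀ i t, 1 ≤ i → i ≤ q → content i t ≤ i) :
    devOf g q content ⊆ (Finset.range (q * g + g)) ×ˢ (Finset.range (q + 1)) := by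
  classical
  intro p hp
  unfold devOf at hp
  simp only [Finset.mem_biUnion, Finset.mem_image, Finset.mem_filter,
    Finset.mem_range, Finset.mem_Icc] at hp
  obtain ⟨i, ⟨hi1, hiq⟩, t, ⟨ht, hne⟩, heq⟩ := hp
  subst heq
  simp only [Finset.mem_product, Finset.mem_range]
  constructor
  · have : i * g ≤ q * g := Nat.mul_le_mul_right _ hiq
    omega
  · have := hrange i t hi1 hiq
    omega

lemma reconstruct_eq {g q : ℕ} {b b' : ℕ → ℕ} {content content' : ℕ → ℕ → ℕ}
    (hb0 : b 0 = 1) (hb0' : b' 0 = 1)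
    (hrange : ∀ i t, 1 ≤ i → i ≤ q → content i t ≤ i)
    (hrange' : ∀ i t, 1 ≤ i → i ≤ q → content' i t ≤ i)
    (hrec : ∀ i, 1 ≤ i → i ≤ q →
      b i = ∑ t ∈ Finset.range g, (if content i t = 0 then 0 else b (content i t - 1)))
    (hrec' : ∀ i, 1 ≤ i → i ≤ q →
      b' i = ∑ t ∈ Finset.range g, (if content' i t = 0 then 0 else b' (content' i t - 1)))
    (hdev : devOf g q content = devOf g q content') :
    ∀ i, i ≤ q → b i = b' i := by
  intro i
  induction i using Nat.strong_induction_on with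
  | _ i ih =>
    intro hiq
    rcases Nat.eq_zero_or_pos i with rfl | hi1
    · rw [hb0, hb0']
    · have hct : ∀ t, t < g → content i t = content' i t := by
        intro t ht
        by_cases hc : content i t = i
        · by_cases hc' : content' i t = i
          · rw [hc, hc']
          · exfalso
            have : (i * g + t, content' i t) ∈ devOf g q content' :=
              (devOf_mem hi1 hiq ht).mpr ⟨hc', rfl⟩
            rw [← hdev] at this
            exact ((devOf_mem hi1 hiq ht).mp this).1 hc
        · have : (i * g + t, content i t) ∈ devOf g q content :=
            (devOf_mem hi1 hiq ht).mpr ⟨hc, rfl⟩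
          rw [hdev] at this
          exact ((devOf_mem hi1 hiq ht).mp this).2
      rw [hrec i hi1 hiq, hrec' i hi1 hiq]
      apply Finset.sum_congr rfl
      intro t ht
      rw [Finset.mem_range] at ht
      rw [← hct t ht]
      by_cases hc0 : content i t = 0
      · simp [hc0]
      · rw [if_neg hc0, if_neg hc0]
        have hle := hrange i t hi1 hiq
        exact ih (content i t - 1) (by omega) (by omega)

-- === new content ===
open Classical in
noncomputable def badSet (g lam : ℕ) : Finset ℕ :=
  (Finset.Ico (g ^ lam) (g ^ (lam + 1))).filter (fun n => 1 ≤ n ∧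
    ¬ ((Nat.log g n : ℝ) + (Nat.log g n : ℝ) /
        (8 * (g : ℝ) * Real.log g * (Nat.log g (Nat.log g n) : ℝ))
      ≤ (gAddChainLength g n : ℝ)))

noncomputable def s0 (g lam : ℕ) : ℕ :=
  ⌈(lam : ℝ) / (8 * (g : ℝ) * Real.log g * (Nat.log g lam : ℝ))⌉₊

noncomputable def rB (g lam : ℕ) : ℕ := lam + s0 g lam

noncomputable def M0 (g lam : ℕ) : ℕ :=
  g + ⌈(9/2 : ℝ) * g * Real.log g * (s0 g lam : ℝ)⌉₊

lemma badSet_empty (g lam : ℕ) (hg : 3 ≤ g) (hL : Nat.log g lam = 0) :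
    badSet g lam = ∅ := by
  classical
  rw [Finset.eq_empty_iff_forall_notMem]
  intro n hn
  rw [badSet, Finset.mem_filter, Finset.mem_Ico] at hn
  obtain ⟨⟨hge, hlt⟩, hn1, hbad⟩ := hn
  have hlog : Nat.log g n = lam := Nat.log_eq_of_pow_le_of_lt_pow hge hlt
  apply hbad
  rw [hlog, hL]
  simp only [Nat.cast_zero, mul_zero, div_zero, add_zero]
  have h := log_le_chainLength hg hn1
  rw [hlog] at h
  exact_mod_cast h

lemma badSet_card_le {g : ℕ} (hg : 3 ≤ g) (lam : ℕ) (hL : 1 ≤ Nat.log g lam) :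
    (badSet g lam).card ≤
      ((Finset.range (rB g lam + 1)) ×ˢ
        (((Finset.range (rB g lam * g + g)) ×ˢ (Finset.range (rB g lam + 1))).powerset.filter
          (fun s => s.card ≤ M0 g lam))).card := by
  classical
  have hlam1 : 1 ≤ lam := by
    by_contra h
    have : lam = 0 := by omega
    simp [this, Nat.log_zero_right] at hL
  have hlogg : (0:ℝ) < Real.log g :=
    Real.log_pos (by exact_mod_cast (by omega : 1 < g))
  have key : ∀ n : ℕ, ∃ (q : ℕ) (content : ℕ → ℕ → ℕ), n ∈ badSet g lam →
      ∃ b : ℕ → ℕ, q ≤ rB g lam ∧ 1 ≤ q ∧ b 0 = 1 ∧ b q = n ∧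
        (∀ i t, 1 ≤ i → i ≤ q → content i t ≤ i) ∧
        (∀ i, 1 ≤ i → i ≤ q →
          b i = ∑ t ∈ Finset.range g, (if content i t = 0 then 0 else b (content i t - 1))) ∧
        (devOf g q content).card ≤ M0 g lam := by
    intro n
    by_cases hn : n ∈ badSet g lam
    swap
    · exact ⟨0, fun _ _ => 0, fun h => absurd h hn⟩
    have hn' := hn
    rw [badSet, Finset.mem_filter, Finset.mem_Ico] at hn'
    obtain ⟨⟨hge, hlt⟩, hn1, hbad⟩ := hn'
    have hlog : Nat.log g n = lam := Nat.log_eq_of_pow_le_of_lt_pow hge hlt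
    set l := gAddChainLength g n with hl
    have hllam : lam ≤ l := by
      have := log_le_chainLength hg hn1
      rwa [hlog] at this
    -- l ≤ rB
    have hlr : l ≤ rB g lam := by
      rw [hlog] at hbad
      push_neg at hbad
      have hx : (lam : ℝ) / (8 * (g : ℝ) * Real.log g * (Nat.log g lam : ℝ))
          ≤ (s0 g lam : ℝ) := Nat.le_ceil _
      have : (l : ℝ) < (lam : ℝ) + (s0 g lam : ℝ) := lt_of_lt_of_le hbad (by linarith)
      have : (l : ℝ) < ((lam + s0 g lam : ℕ) : ℝ) := by push_cast; linarith
      have := Nat.cast_lt.mp this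
      rw [rB]
      omega
    -- chain and good chain
    have hn2 : 2 ≤ n := by
      have : g ≤ g ^ lam := by
        calc g = g ^ 1 := (pow_one g).symm
          _ ≤ g ^ lam := Nat.pow_le_pow_right (by omega) hlam1
      omega
    obtain ⟨a, ha⟩ := chainLength_spec hg hn1
    obtain ⟨q, hql, hq1, b, hgood, hbq⟩ := goodChain_exists hg ha hn2
    obtain ⟨content, hrange, hrec⟩ := descriptor_exists hgood
    obtain ⟨H1, H2⟩ := step_bounds hgood hrange hrec
    have hpos : ∀ i, i ≤ q → 1 ≤ b i := by
      intro i hi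
      calc 1 = b 0 := hgood.1.symm
        _ ≤ b i := goodChain_mono_le hgood 0 i (Nat.zero_le _) hi
    have hqr : q ≤ rB g lam := le_trans hql hlr
    refine ⟨q, content, fun _ => ⟨b, hqr, hq1, hgood.1, hbq, hrange, hrec, ?_⟩⟩
    -- card bound
    have hsum := sum_m_bound hg hq1 hgood.1 hpos H1 H2 (mOf_le g content)
    have hlogn : (lam : ℝ) * Real.log g ≤ Real.log (b q) := by
      rw [hbq]
      calc (lam : ℝ) * Real.log g = Real.log ((g : ℝ) ^ lam) := by
            rw [Real.log_pow]
        _ ≤ Real.log n := by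
            apply Real.log_le_log (by positivity)
            exact_mod_cast hge
    have hqlam : (q : ℝ) * Real.log g - Real.log (b q) ≤ (s0 g lam : ℝ) * Real.log g := by
      have hcast : (q : ℝ) ≤ (lam : ℝ) + (s0 g lam : ℝ) := by
        have : (q:ℝ) ≤ ((lam + s0 g lam : ℕ):ℝ) := by exact_mod_cast hqr
        push_cast at this
        linarith
      nlinarith
    have hsplit : ∑ i ∈ Finset.Icc 1 q, mOf g content i
        = mOf g content 1 + ∑ i ∈ Finset.Icc 2 q, mOf g content i := by
      rw [show Finset.Icc 1 q = insert 1 (Finset.Icc 2 q) from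
        Finset.ext (fun x => by simp only [Finset.mem_insert, Finset.mem_Icc]; omega)]
      rw [Finset.sum_insert (by simp [Finset.mem_Icc])]
    have hcard1 : ((devOf g q content).card : ℝ) ≤
        (g : ℝ) + (9/2) * g * Real.log g * (s0 g lam : ℝ) := by
      have h1 : ((devOf g q content).card : ℝ) ≤ ∑ i ∈ Finset.Icc 1 q, (mOf g content i : ℝ) := by
        have := devOf_card_le g q content
        calc ((devOf g q content).card : ℝ)
            ≤ ((∑ i ∈ Finset.Icc 1 q, mOf g content i : ℕ) : ℝ) := by exact_mod_cast this
          _ = ∑ i ∈ Finset.Icc 1 q, (mOf g content i : ℝ) := by push_cast; ring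
      have h2 : ∑ i ∈ Finset.Icc 1 q, (mOf g content i : ℝ)
          = (mOf g content 1 : ℝ) + ∑ i ∈ Finset.Icc 2 q, (mOf g content i : ℝ) := by
        exact_mod_cast congrArg (fun x : ℕ => (x : ℝ)) hsplit
      have h3 : (mOf g content 1 : ℝ) ≤ g := by exact_mod_cast mOf_le g content 1
      have h4 : (∑ i ∈ Finset.Icc 2 q, (mOf g content i : ℝ)) ≤
          (9/2) * g * Real.log g * (s0 g lam : ℝ) := by
        calc (∑ i ∈ Finset.Icc 2 q, (mOf g content i : ℝ))
            ≤ (9/2) * g * (q * Real.log g - Real.log (b q)) := hsum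
          _ ≤ (9/2) * g * ((s0 g lam : ℝ) * Real.log g) := by
              apply mul_le_mul_of_nonneg_left hqlam (by positivity)
          _ = (9/2) * g * Real.log g * (s0 g lam : ℝ) := by ring
      linarith
    -- conclude card ≤ M0
    have : (devOf g q content).card ≤ g + ⌈(9/2 : ℝ) * g * Real.log g * (s0 g lam : ℝ)⌉₊ := by
      have hc : ((devOf g q content).card : ℝ) ≤
          ((g + ⌈(9/2 : ℝ) * g * Real.log g * (s0 g lam : ℝ)⌉₊ : ℕ) : ℝ) := by
        push_cast
        have := Nat.le_ceil ((9/2 : ℝ) * g * Real.log g * (s0 g lam : ℝ))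
        linarith
      exact_mod_cast hc
    rw [M0]
    exact this
  choose Q C hkey using key
  apply Finset.card_le_card_of_injOn (fun n => (Q n, devOf g (Q n) (C n)))
  · -- maps to
    intro n hn
    obtain ⟨b, hqr, hq1, hb0, hbq, hrange, hrec, hcard⟩ := hkey n hn
    simp only [Finset.mem_coe, Finset.mem_product, Finset.mem_range, Finset.mem_filter, Finset.mem_powerset]
    refine ⟨by omega, ?_, hcard⟩
    apply le_trans (devOf_subset hrange)
    apply Finset.product_subset_product <;> apply Finset.range_subset_range.mpr
    · have : Q n * g ≤ rB g lam * g := Nat.mul_le_mul_right _ hqr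
      omega
    · omega
  · -- inj on
    intro n hn n' hn' heq
    obtain ⟨b, hqr, hq1, hb0, hbq, hrange, hrec, hcard⟩ := hkey n hn
    obtain ⟨b', hqr', hq1', hb0', hbq', hrange', hrec', hcard'⟩ := hkey n' hn'
    simp only [Prod.mk.injEq] at heq
    obtain ⟨hQ, hD⟩ := heq
    rw [← hQ] at hrange' hrec' hbq' hD
    have := reconstruct_eq hb0 hb0' hrange hrange' hrec hrec' hD (Q n) (le_refl _)
    rw [hbq, hbq'] at this
    exact this

/-- subsets of a grid of card ≤ M inject into M-subsets of a padded grid -/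
lemma card_filter_powerset_le (A B M : ℕ) (hB : 1 ≤ B) :
    (((Finset.range A) ×ˢ (Finset.range B)).powerset.filter (fun s => s.card ≤ M)).card
      ≤ ((A + M) * B).choose M := by
  classical
  have htarget : (Finset.powersetCard M ((Finset.range (A + M)) ×ˢ (Finset.range B))).card
      = ((A + M) * B).choose M := by
    rw [Finset.card_powersetCard, Finset.card_product, Finset.card_range, Finset.card_range]
  rw [← htarget]
  apply Finset.card_le_card_of_injOn
    (fun s => s ∪ (Finset.range (M - s.card)).image (fun j => (A + j, 0)))
  · -- maps to
    intro s hs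
    simp only [Finset.mem_coe, Finset.mem_filter, Finset.mem_powerset] at hs
    obtain ⟨hsub, hcard⟩ := hs
    have hdisj : Disjoint s ((Finset.range (M - s.card)).image (fun j => (A + j, 0))) := by
      rw [Finset.disjoint_left]
      intro p hp hq
      simp only [Finset.mem_image, Finset.mem_range] at hq
      obtain ⟨j, _, rfl⟩ := hq
      have := hsub hp
      simp only [Finset.mem_product, Finset.mem_range] at this
      omega
    have hinj : Set.InjOn (fun j => ((A + j, 0) : ℕ × ℕ)) (Finset.range (M - s.card)) := by
      intro x _ y _ hxy
      simp only [Prod.mk.injEq] at hxy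
      omega
    rw [Finset.mem_coe, Finset.mem_powersetCard]
    constructor
    · apply Finset.union_subset
      · intro p hp
        have := hsub hp
        simp only [Finset.mem_product, Finset.mem_range] at this ⊢
        omega
      · intro p hp
        simp only [Finset.mem_image, Finset.mem_range] at hp
        obtain ⟨j, hj, rfl⟩ := hp
        simp only [Finset.mem_product, Finset.mem_range]
        omega
    · rw [Finset.card_union_of_disjoint hdisj, Finset.card_image_of_injOn hinj,
        Finset.card_range]
      omega
  · -- inj on
    intro s hs s' hs' heq
    simp only [Finset.mem_coe, Finset.mem_filter, Finset.mem_powerset] at hs hs'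
    have hrec : ∀ u : Finset (ℕ × ℕ), u ⊆ (Finset.range A) ×ˢ (Finset.range B) →
        (u ∪ (Finset.range (M - u.card)).image (fun j => (A + j, 0))).filter
          (fun p => p.1 < A) = u := by
      intro u hu
      ext p
      simp only [Finset.mem_filter, Finset.mem_union, Finset.mem_image, Finset.mem_range]
      constructor
      · rintro ⟨hp | ⟨j, hj, rfl⟩, hlt⟩
        · exact hp
        · omega
      · intro hp
        have := hu hp
        simp only [Finset.mem_product, Finset.mem_range] at this
        exact ⟨Or.inl hp, this.1⟩
    simp only at heq
    have h2 := congrArg (Finset.filter (fun p => p.1 < A)) heq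
    rw [hrec s hs.1, hrec s' hs'.1] at h2
    exact h2

lemma factorial_ge (k : ℕ) (hk : 1 ≤ k) :
    ((k : ℝ) / Real.exp 1) ^ k ≤ (Nat.factorial k : ℝ) := by
  induction k with
  | zero => omega
  | succ k ih =>
    rcases Nat.eq_zero_or_pos k with rfl | hk1
    · have h1 : (1:ℝ)/Real.exp 1 ≤ 1 := by
        rw [div_le_one (Real.exp_pos 1)]
        linarith [Real.add_one_le_exp 1]
      simpa using h1
    · have ih' := ih hk1
      have hkpos : (0:ℝ) < k := by exact_mod_cast hk1
      have hepos := Real.exp_pos 1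
      have hbern : ((k:ℝ) + 1) ^ k ≤ (k:ℝ) ^ k * Real.exp 1 := by
        have h1 : ((k:ℝ) + 1) = (k:ℝ) * (1 + 1/(k:ℝ)) := by field_simp
        have h2 : (1 + 1/(k:ℝ)) ^ k ≤ Real.exp 1 := by
          have h3 : (1 + 1/(k:ℝ)) ≤ Real.exp (1/(k:ℝ)) := by
            have := Real.add_one_le_exp (1/(k:ℝ))
            linarith
          calc (1 + 1/(k:ℝ)) ^ k ≤ (Real.exp (1/(k:ℝ))) ^ k := by
                apply pow_le_pow_left₀ (by positivity) h3
            _ = Real.exp ((1/(k:ℝ)) * k) := by rw [← Real.exp_nat_mul]; ring_nf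
            _ = Real.exp 1 := by
                congr 1
                field_simp
        calc ((k:ℝ) + 1) ^ k = (k:ℝ) ^ k * (1 + 1/(k:ℝ)) ^ k := by
              rw [h1, mul_pow]
          _ ≤ (k:ℝ) ^ k * Real.exp 1 := by
              apply mul_le_mul_of_nonneg_left h2 (by positivity)
      have hfact : (Nat.factorial (k+1) : ℝ) = ((k:ℝ) + 1) * (Nat.factorial k : ℝ) := by
        rw [Nat.factorial_succ]
        push_cast
        ring
      rw [hfact]
      have : (((k:ℝ) + 1) / Real.exp 1) ^ (k + 1)
          = (((k:ℝ) + 1) ^ k / (Real.exp 1) ^ k) * (((k:ℝ) + 1) / Real.exp 1) := by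
        rw [div_pow]
        ring
      push_cast
      rw [this]
      calc ((k:ℝ) + 1) ^ k / (Real.exp 1) ^ k * (((k:ℝ) + 1) / Real.exp 1)
          ≤ ((k:ℝ) ^ k * Real.exp 1) / (Real.exp 1) ^ k * (((k:ℝ) + 1) / Real.exp 1) := by
            apply mul_le_mul_of_nonneg_right _ (by positivity)
            apply div_le_div_of_nonneg_right hbern (by positivity) |>.trans_eq rfl
        _ = ((k:ℝ) / Real.exp 1) ^ k * ((k:ℝ) + 1) := by
            rw [div_pow]
            field_simp
        _ ≤ (Nat.factorial k : ℝ) * ((k:ℝ) + 1) := by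
            apply mul_le_mul_of_nonneg_right ih' (by positivity)
        _ = ((k:ℝ) + 1) * (Nat.factorial k : ℝ) := by ring

lemma choose_le_ratio (n k : ℕ) (hk : 1 ≤ k) :
    ((n.choose k : ℕ) : ℝ) ≤ (Real.exp 1 * n / k) ^ k := by
  have h1 : ((n.choose k : ℕ) : ℝ) ≤ (n:ℝ) ^ k / (Nat.factorial k : ℝ) := by
    exact_mod_cast Nat.choose_le_pow_div k n
  have h2 : (0:ℝ) < (Nat.factorial k : ℝ) := by exact_mod_cast Nat.factorial_pos k
  have h3 := factorial_ge k hk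
  have hkpos : (0:ℝ) < (k:ℝ) := by exact_mod_cast hk
  have h4 : ((k : ℝ) / Real.exp 1) ^ k > 0 := by positivity
  calc ((n.choose k : ℕ) : ℝ) ≤ (n:ℝ) ^ k / (Nat.factorial k : ℝ) := h1
    _ ≤ (n:ℝ) ^ k / ((k : ℝ) / Real.exp 1) ^ k := by
        apply div_le_div_of_nonneg_left (by positivity) h4 h3
    _ = (Real.exp 1 * n / k) ^ k := by
        rw [← div_pow]
        congr 1
        field_simp

noncomputable section
open Filter Real
-- === new ===
def NN (g lam : ℕ) : ℕ := (rB g lam * g + g + M0 g lam) * (rB g lam + 1)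

lemma badSet_card_real {g : ℕ} (hg : 3 ≤ g) (lam : ℕ) (hL : 1 ≤ Nat.log g lam) :
    ((badSet g lam).card : ℝ) ≤
      ((rB g lam + 1 : ℕ) : ℝ) * (Real.exp 1 * NN g lam / M0 g lam) ^ (M0 g lam) := by
  have hM1 : 1 ≤ M0 g lam := by
    rw [M0]; omega
  have h1 := badSet_card_le hg lam hL
  have h2 : ((Finset.range (rB g lam + 1)) ×ˢ
      (((Finset.range (rB g lam * g + g)) ×ˢ (Finset.range (rB g lam + 1))).powerset.filter
        (fun s => s.card ≤ M0 g lam))).card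
      ≤ (rB g lam + 1) * (((rB g lam * g + g) + M0 g lam) * (rB g lam + 1)).choose (M0 g lam) := by
    rw [Finset.card_product, Finset.card_range]
    apply Nat.mul_le_mul_left
    exact card_filter_powerset_le _ _ _ (by omega)
  have h3 : (badSet g lam).card ≤
      (rB g lam + 1) * (NN g lam).choose (M0 g lam) := le_trans h1 (by rw [NN]; exact h2)
  calc ((badSet g lam).card : ℝ)
      ≤ (((rB g lam + 1) * (NN g lam).choose (M0 g lam) : ℕ) : ℝ) := by exact_mod_cast h3
    _ = ((rB g lam + 1 : ℕ) : ℝ) * (((NN g lam).choose (M0 g lam) : ℕ) : ℝ) := by push_cast; ring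
    _ ≤ ((rB g lam + 1 : ℕ) : ℝ) * (Real.exp 1 * NN g lam / M0 g lam) ^ (M0 g lam) := by
        apply mul_le_mul_of_nonneg_left (choose_le_ratio _ _ hM1) (by positivity)

lemma log_tendsto_atTop {g : ℕ} (hg : 3 ≤ g) :
    Tendsto (fun lam : ℕ => Nat.log g lam) atTop atTop := by
  apply Filter.tendsto_atTop_atTop.mpr
  intro K
  refine ⟨g ^ K, fun lam hlam => ?_⟩
  apply Nat.le_log_of_pow_le (by omega) hlam


lemma aux_tendsto (a b : ℝ) :
    Tendsto (fun x : ℝ => (a + b * Real.log x) / x) atTop (nhds 0) := by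
  have h1 : Tendsto (fun x : ℝ => a / x) atTop (nhds 0) :=
    Tendsto.div_atTop tendsto_const_nhds tendsto_id
  have h2 : Tendsto (fun x : ℝ => b * (Real.log x / x)) atTop (nhds 0) := by
    have := Real.isLittleO_log_id_atTop.tendsto_div_nhds_zero
    simpa using this.const_mul b
  have h3 := h1.add h2
  simp only [add_zero] at h3
  apply h3.congr'
  filter_upwards [eventually_gt_atTop (0:ℝ)] with x hx
  field_simp

lemma aux_tendsto_nat (a b : ℝ) :
    Tendsto (fun n : ℕ => (a + b * Real.log n) / n) atTop (nhds 0) :=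
  (aux_tendsto a b).comp tendsto_natCast_atTop_atTop

lemma aux_tendsto_L {g : ℕ} (hg : 3 ≤ g) (a b : ℝ) :
    Tendsto (fun lam : ℕ => (a + b * Real.log (Nat.log g lam)) / (Nat.log g lam : ℕ))
      atTop (nhds 0) :=
  (aux_tendsto_nat a b).comp (log_tendsto_atTop hg)

lemma one_le_log_g {g : ℕ} (hg : 3 ≤ g) : (1:ℝ) ≤ Real.log g := by
  have hg3 : (3:ℝ) ≤ (g:ℝ) := by exact_mod_cast hg
  calc (1:ℝ) ≤ Real.log 3 := by
        rw [Real.le_log_iff_exp_le (by norm_num)]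
        calc Real.exp 1 ≤ 2.7182818286 := le_of_lt Real.exp_one_lt_d9
          _ ≤ 3 := by norm_num
    _ ≤ Real.log g := Real.log_le_log (by norm_num) hg3

set_option maxHeartbeats 1000000 in
lemma key_exponent {gR lam L r M N D C2 C3 : ℝ}
    (hlng1 : 1 ≤ Real.log gR)
    (hlam : 1 ≤ lam) (hL : 16 ≤ L)
    (hr0 : 0 ≤ r) (hr : r ≤ 2 * lam)
    (hM_le : M ≤ (9/16) * lam / L + D) (hM_ge : (9/16) * lam / L ≤ M) (hMpos : 0 < M)
    (hN1 : 1 ≤ N) (hN_le : N ≤ C2 * lam ^ 2)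
    (hC2pos : 0 < C2)
    (hC3 : 1 + Real.log C2 + Real.log (16/9) ≤ C3) (hC30 : 0 ≤ C3)
    (hD0 : 0 ≤ D)
    (hloglam : Real.log lam ≤ (L + 1) * Real.log gR)
    (hE3 : (C3 + Real.log L) / L < Real.log gR / 16)
    (hE4 : (Real.log 3 + Real.log lam) / lam < Real.log gR / 20)
    (hE5 : (D * C3 + 2 * D * Real.log lam) / lam < Real.log gR / 20)
    (hLloglam : Real.log L ≤ Real.log lam) :
    Real.log (r + 1) + M * (1 + Real.log N - Real.log M) - lam * Real.log gR
      ≤ -(Real.log gR / 4) * lam := by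
  have hlampos : (0:ℝ) < lam := by linarith
  have hLpos : (0:ℝ) < L := by linarith
  have hlng : (0:ℝ) < Real.log gR := by linarith
  have hlog_r : Real.log (r + 1) ≤ Real.log 3 + Real.log lam := by
    calc Real.log (r + 1) ≤ Real.log (3 * lam) := by
          apply Real.log_le_log (by linarith)
          linarith
      _ = Real.log 3 + Real.log lam := Real.log_mul (by norm_num) (by positivity)
  have hlog_N : Real.log N ≤ Real.log C2 + 2 * Real.log lam := by
    calc Real.log N ≤ Real.log (C2 * lam ^ 2) :=
          Real.log_le_log (by linarith) hN_le
      _ = Real.log C2 + 2 * Real.log lam := by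
          rw [Real.log_mul (ne_of_gt hC2pos) (by positivity), Real.log_pow]
          push_cast
          ring
  have hlog_M : - Real.log M ≤ Real.log L - Real.log lam + Real.log (16/9) := by
    have h1 : Real.log ((9/16) * lam / L) ≤ Real.log M := by
      apply Real.log_le_log (by positivity) hM_ge
    have h2 : Real.log ((9/16) * lam / L)
        = Real.log (9/16) + Real.log lam - Real.log L := by
      rw [Real.log_div (by positivity) (ne_of_gt hLpos),
        Real.log_mul (by norm_num) (ne_of_gt hlampos)]
    have h3 : Real.log (16/9) = - Real.log (9/16) := by
      rw [← Real.log_inv]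
      norm_num
    rw [h3]
    linarith
  have hfac : 1 + Real.log N - Real.log M ≤ C3 + Real.log lam + Real.log L := by
    linarith
  have hfac0 : 0 ≤ C3 + Real.log lam + Real.log L := by
    have h1 : 0 ≤ Real.log lam := Real.log_nonneg hlam
    have h2 : 0 ≤ Real.log L := Real.log_nonneg (by linarith)
    linarith
  have hterm : M * (1 + Real.log N - Real.log M)
      ≤ ((9/16) * lam / L + D) * (C3 + Real.log lam + Real.log L) := by
    calc M * (1 + Real.log N - Real.log M)
        ≤ M * (C3 + Real.log lam + Real.log L) :=
          mul_le_mul_of_nonneg_left hfac (le_of_lt hMpos)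
      _ ≤ ((9/16) * lam / L + D) * (C3 + Real.log lam + Real.log L) :=
          mul_le_mul_of_nonneg_right hM_le hfac0
  have hpiece1 : ((9/16) * lam / L) * (C3 + Real.log lam + Real.log L)
      ≤ (81/128) * Real.log gR * lam := by
    have hA : (C3 + Real.log L) / L ≤ Real.log gR / 16 := le_of_lt hE3
    have hB : Real.log lam / L ≤ (17/16) * Real.log gR := by
      rw [div_le_iff₀ hLpos]
      nlinarith [mul_nonneg (le_of_lt hlng) (by linarith : (0:ℝ) ≤ L - 16)]
    have hexpand : ((9/16) * lam / L) * (C3 + Real.log lam + Real.log L)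
        = (9/16) * lam * ((C3 + Real.log L) / L + Real.log lam / L) := by
      field_simp
      ring
    rw [hexpand]
    have hC : (C3 + Real.log L) / L + Real.log lam / L
        ≤ Real.log gR / 16 + (17/16) * Real.log gR := by linarith
    calc (9/16) * lam * ((C3 + Real.log L) / L + Real.log lam / L)
        ≤ (9/16) * lam * (Real.log gR / 16 + (17/16) * Real.log gR) := by
          apply mul_le_mul_of_nonneg_left hC (by positivity)
      _ = (81/128) * Real.log gR * lam := by ring
  have hpiece2 : D * (C3 + Real.log lam + Real.log L) ≤ (Real.log gR / 20) * lam := by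
    rw [div_lt_iff₀ hlampos] at hE5
    have hDl := mul_le_mul_of_nonneg_left hLloglam hD0
    nlinarith [hDl]
  have hpiece3 : Real.log 3 + Real.log lam ≤ (Real.log gR / 20) * lam := by
    rw [div_lt_iff₀ hlampos] at hE4
    linarith
  have hsplit : ((9/16) * lam / L + D) * (C3 + Real.log lam + Real.log L)
      = ((9/16) * lam / L) * (C3 + Real.log lam + Real.log L)
        + D * (C3 + Real.log lam + Real.log L) := by ring
  rw [hsplit] at hterm
  have hfinal : (Real.log gR / 20) * lam + ((81/128) * Real.log gR * lam
      + (Real.log gR / 20) * lam) - lam * Real.log gR ≤ -(Real.log gR / 4) * lam := by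
    have hu : (0:ℝ) ≤ Real.log gR * lam := mul_nonneg (by linarith) (by linarith)
    linarith [hu]
  linarith

-- small cast lemmas about s0 / rB / M0 / NN
set_option maxHeartbeats 1000000 in
lemma s0_facts {g lam : ℕ} (hg : 3 ≤ g) (hlam : 1 ≤ lam) (hL : 1 ≤ Nat.log g lam) :
    (lam : ℝ) / (8 * g * Real.log g * (Nat.log g lam : ℝ)) ≤ (s0 g lam : ℝ) ∧
    (s0 g lam : ℝ) ≤ (lam : ℝ) / (8 * g * Real.log g * (Nat.log g lam : ℝ)) + 1 ∧
    s0 g lam ≤ lam := by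
  have hlng1 := one_le_log_g hg
  have hgR : (3:ℝ) ≤ (g:ℝ) := by exact_mod_cast hg
  have hLR : (1:ℝ) ≤ ((Nat.log g lam : ℕ) : ℝ) := by exact_mod_cast hL
  have hlamR : (1:ℝ) ≤ (lam:ℝ) := by exact_mod_cast hlam
  have hA : (1:ℝ) * 1 ≤ Real.log ↑g * ((Nat.log g lam : ℕ) : ℝ) :=
    mul_le_mul hlng1 hLR (by norm_num) (by linarith)
  have hden : (1:ℝ) ≤ 8 * g * Real.log g * (Nat.log g lam : ℝ) := by
    calc (1:ℝ) = 1 * (1 * 1) := by ring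
      _ ≤ (8 * (g:ℝ)) * (Real.log g * (Nat.log g lam : ℝ)) := by
          apply mul_le_mul (by linarith) (by linarith [hA]) (by norm_num) (by linarith)
      _ = 8 * g * Real.log g * (Nat.log g lam : ℝ) := by ring
  have hdenpos : (0:ℝ) < 8 * g * Real.log g * (Nat.log g lam : ℝ) := by linarith
  refine ⟨Nat.le_ceil _, le_of_lt (Nat.ceil_lt_add_one (by positivity)), ?_⟩
  have hle : (lam : ℝ) / (8 * g * Real.log g * (Nat.log g lam : ℝ)) ≤ (lam:ℝ) := by
    rw [div_le_iff₀ hdenpos]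
    have := mul_le_mul_of_nonneg_left hden (by linarith : (0:ℝ) ≤ (lam:ℝ))
    linarith [this]
  calc s0 g lam ≤ ⌈(lam:ℝ)⌉₊ := Nat.ceil_le_ceil hle
    _ = lam := Nat.ceil_natCast lam

set_option maxHeartbeats 1000000 in
lemma M0_facts {g lam : ℕ} (hg : 3 ≤ g) (hlam : 1 ≤ lam) (hL : 1 ≤ Nat.log g lam) :
    (9/16 : ℝ) * lam / (Nat.log g lam : ℝ) ≤ (M0 g lam : ℝ) ∧
    (M0 g lam : ℝ) ≤ (9/16 : ℝ) * lam / (Nat.log g lam : ℝ)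
      + ((g:ℝ) + (9/2) * g * Real.log g + 1) := by
  obtain ⟨hs0ge, hs0le, -⟩ := s0_facts hg hlam hL
  have hlng1 := one_le_log_g hg
  have hlng : (0:ℝ) < Real.log g := by linarith
  have hgR : (3:ℝ) ≤ (g:ℝ) := by exact_mod_cast hg
  have hLR : (1:ℝ) ≤ ((Nat.log g lam : ℕ) : ℝ) := by exact_mod_cast hL
  have hLpos : (0:ℝ) < ((Nat.log g lam : ℕ) : ℝ) := by linarith
  have hkey : (9/2 : ℝ) * g * Real.log g * ((lam:ℝ) / (8 * g * Real.log g * (Nat.log g lam : ℝ)))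
      = (9/16) * lam / (Nat.log g lam : ℝ) := by
    have hgne : (g:ℝ) ≠ 0 := by positivity
    have hlogne : Real.log g ≠ 0 := ne_of_gt hlng
    have hLne : ((Nat.log g lam : ℕ) : ℝ) ≠ 0 := ne_of_gt hLpos
    field_simp
    ring
  constructor
  · have h1 : (9/2 : ℝ) * g * Real.log g * ((lam:ℝ) / (8 * g * Real.log g * (Nat.log g lam : ℝ)))
        ≤ (9/2 : ℝ) * g * Real.log g * (s0 g lam : ℝ) :=
      mul_le_mul_of_nonneg_left hs0ge (by positivity)
    have h2 := Nat.le_ceil ((9/2 : ℝ) * g * Real.log g * (s0 g lam : ℝ))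
    have h3 : (⌈(9/2 : ℝ) * g * Real.log g * (s0 g lam : ℝ)⌉₊ : ℝ) ≤ (M0 g lam : ℝ) := by
      rw [M0]
      push_cast
      have : (0:ℝ) ≤ (g:ℝ) := by positivity
      linarith
    rw [← hkey]
    linarith
  · rw [M0]
    push_cast
    have h1 : (⌈(9/2 : ℝ) * g * Real.log g * (s0 g lam : ℝ)⌉₊ : ℝ)
        ≤ (9/2 : ℝ) * g * Real.log g * (s0 g lam : ℝ) + 1 :=
      le_of_lt (Nat.ceil_lt_add_one (by positivity))
    have h2 : (9/2 : ℝ) * g * Real.log g * (s0 g lam : ℝ)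
        ≤ (9/2 : ℝ) * g * Real.log g *
          ((lam:ℝ) / (8 * g * Real.log g * (Nat.log g lam : ℝ)) + 1) :=
      mul_le_mul_of_nonneg_left hs0le (by positivity)
    have h3 : (9/2 : ℝ) * g * Real.log g *
          ((lam:ℝ) / (8 * g * Real.log g * (Nat.log g lam : ℝ)) + 1)
        = (9/16) * lam / (Nat.log g lam : ℝ) + (9/2) * g * Real.log g := by
      rw [mul_add, hkey]
      ring
    linarith

set_option maxHeartbeats 1000000 in
lemma NN_facts {g lam : ℕ} (hg : 3 ≤ g) (hlam : 1 ≤ lam) (hL : 1 ≤ Nat.log g lam)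
    (hs0 : s0 g lam ≤ lam)
    (hM0 : (M0 g lam : ℝ) ≤ (9/16 : ℝ) * lam / (Nat.log g lam : ℝ)
      + ((g:ℝ) + (9/2) * g * Real.log g + 1)) :
    (1 ≤ NN g lam) ∧
    ((NN g lam : ℝ) ≤ (3 * (3 * (g:ℝ) + 1 + ((g:ℝ) + (9/2) * g * Real.log g + 1))) * lam ^ 2) := by
  have hgR : (3:ℝ) ≤ (g:ℝ) := by exact_mod_cast hg
  have hlamR : (1:ℝ) ≤ (lam:ℝ) := by exact_mod_cast hlam
  have hLR : (1:ℝ) ≤ ((Nat.log g lam : ℕ) : ℝ) := by exact_mod_cast hL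
  have hrB : (rB g lam : ℝ) ≤ 2 * lam := by
    have : rB g lam ≤ 2 * lam := by rw [rB]; omega
    exact_mod_cast this
  have hrB0 : (0:ℝ) ≤ (rB g lam : ℝ) := by positivity
  constructor
  · rw [NN]
    have h1 : 1 ≤ rB g lam + 1 := by omega
    apply Nat.one_le_iff_ne_zero.mpr
    apply Nat.mul_ne_zero <;> omega
  · have hcast : (NN g lam : ℝ)
        = ((rB g lam : ℝ) * g + g + M0 g lam) * ((rB g lam : ℝ) + 1) := by
      rw [NN]
      push_cast
      ring
    rw [hcast]
    set D : ℝ := (g:ℝ) + (9/2) * g * Real.log g + 1 with hD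
    have hlng1 := one_le_log_g hg
    have hD1 : (1:ℝ) ≤ D := by
      have : (0:ℝ) ≤ (9/2) * g * Real.log g := by positivity
      simp only [hD]
      linarith
    have h916 : (9/16 : ℝ) * lam / (Nat.log g lam : ℝ) ≤ lam := by
      rw [div_le_iff₀ (by linarith)]
      have := mul_le_mul_of_nonneg_left hLR (by linarith : (0:ℝ) ≤ (lam:ℝ))
      linarith [this]
    have hM0' : (M0 g lam : ℝ) ≤ lam + D := le_trans hM0 (by linarith)
    have h5 : (rB g lam : ℝ) * g + g + M0 g lam ≤ (3 * g + 1 + D) * lam := by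
      have h6 : (rB g lam : ℝ) * g ≤ 2 * lam * g :=
        mul_le_mul_of_nonneg_right hrB (by positivity)
      have hDlam : D ≤ D * lam := by
        calc D = D * 1 := by ring
          _ ≤ D * lam := mul_le_mul_of_nonneg_left hlamR (by linarith)
      have hglam : (g:ℝ) ≤ g * lam := by
        calc (g:ℝ) = g * 1 := by ring
          _ ≤ g * lam := mul_le_mul_of_nonneg_left hlamR (by linarith)
      linarith
    have h4 : (rB g lam : ℝ) + 1 ≤ 3 * lam := by linarith
    have h6 : (0:ℝ) ≤ (rB g lam : ℝ) * g + g + M0 g lam := by positivity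
    calc ((rB g lam : ℝ) * g + g + M0 g lam) * ((rB g lam : ℝ) + 1)
        ≤ ((3 * g + 1 + D) * lam) * (3 * lam) := by
          apply mul_le_mul h5 h4 (by linarith) (by positivity)
      _ = (3 * (3 * (g:ℝ) + 1 + D)) * lam ^ 2 := by ring

set_option maxHeartbeats 1000000 in
lemma tendsto_badSet_ratio {g : ℕ} (hg : 3 ≤ g) :
    Tendsto (fun lam : ℕ => ((badSet g lam).card : ℝ) / (g : ℝ) ^ lam) atTop (nhds 0) := by
  have hg1 : (1:ℝ) < (g:ℝ) := by exact_mod_cast (by omega : 1 < g)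
  have hlng1 := one_le_log_g hg
  have hlng : 0 < Real.log g := by linarith
  have hgR : (3:ℝ) ≤ (g:ℝ) := by exact_mod_cast hg
  -- constants
  set D : ℝ := (g:ℝ) + (9/2) * g * Real.log g + 1 with hD
  have hD1 : (1:ℝ) ≤ D := by
    have : (0:ℝ) ≤ (9/2) * g * Real.log g := by positivity
    simp only [hD]; linarith
  set C2 : ℝ := 3 * (3 * (g:ℝ) + 1 + D) with hC2
  have hC21 : (1:ℝ) ≤ C2 := by simp only [hC2]; nlinarith
  set C3 : ℝ := 1 + Real.log C2 + Real.log (16/9) with hC3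
  have hC30 : 0 ≤ C3 := by
    have h1 : 0 ≤ Real.log C2 := Real.log_nonneg hC21
    have h2 : 0 ≤ Real.log (16/9) := Real.log_nonneg (by norm_num)
    simp only [hC3]; linarith
  have E1 : ∀ᶠ lam : ℕ in atTop, 16 ≤ Nat.log g lam :=
    (log_tendsto_atTop hg).eventually_ge_atTop 16
  have E3 : ∀ᶠ lam : ℕ in atTop,
      (C3 + Real.log (Nat.log g lam)) / ((Nat.log g lam : ℕ) : ℝ) < Real.log g / 16 := by
    have h := aux_tendsto_L hg C3 1
    simp only [one_mul] at h
    exact h.eventually_lt_const (by positivity)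
  have E4 : ∀ᶠ lam : ℕ in atTop,
      (Real.log 3 + Real.log lam) / (lam : ℝ) < Real.log g / 20 := by
    have h := aux_tendsto_nat (Real.log 3) 1
    simp only [one_mul] at h
    exact h.eventually_lt_const (by positivity)
  have E5 : ∀ᶠ lam : ℕ in atTop,
      (D * C3 + 2 * D * Real.log lam) / (lam : ℝ) < Real.log g / 20 := by
    exact (aux_tendsto_nat (D * C3) (2 * D)).eventually_lt_const (by positivity)
  have E6 : ∀ᶠ lam : ℕ in atTop, g ≤ lam := eventually_ge_atTop g
  have main : ∀ᶠ lam : ℕ in atTop,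
      ((badSet g lam).card : ℝ) / (g : ℝ) ^ lam ≤ Real.exp (-(Real.log g / 4) * lam) := by
    filter_upwards [E1, E3, E4, E5, E6] with lam hE1 hE3 hE4 hE5 hE6
    have hlam1 : 1 ≤ lam := by omega
    have hlamR : (1:ℝ) ≤ (lam:ℝ) := by exact_mod_cast hlam1
    have hL1 : 1 ≤ Nat.log g lam := by omega
    have hLR16 : (16:ℝ) ≤ ((Nat.log g lam : ℕ) : ℝ) := by exact_mod_cast hE1
    have hLpos : (0:ℝ) < ((Nat.log g lam : ℕ) : ℝ) := by linarith
    obtain ⟨hs0ge, hs0le, hs0lam⟩ := s0_facts hg hlam1 hL1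
    obtain ⟨hM0ge, hM0le⟩ := M0_facts hg hlam1 hL1
    obtain ⟨hNN1, hNNle⟩ := NN_facts hg hlam1 hL1 hs0lam hM0le
    have hMpos : (0:ℝ) < (M0 g lam : ℝ) := by
      have : 1 ≤ M0 g lam := by rw [M0]; omega
      exact_mod_cast this
    have hrB2 : (rB g lam : ℝ) ≤ 2 * lam := by
      have : rB g lam ≤ 2 * lam := by rw [rB]; omega
      exact_mod_cast this
    have hloglam : Real.log lam ≤ (((Nat.log g lam : ℕ) : ℝ) + 1) * Real.log g := by
      have h1 : (lam:ℝ) ≤ (g:ℝ) ^ (Nat.log g lam + 1) := by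
        have := Nat.lt_pow_succ_log_self (by omega : 1 < g) lam
        exact_mod_cast le_of_lt this
      calc Real.log lam ≤ Real.log ((g:ℝ) ^ (Nat.log g lam + 1)) :=
            Real.log_le_log (by positivity) h1
        _ = (((Nat.log g lam : ℕ) : ℝ) + 1) * Real.log g := by
            rw [Real.log_pow]; push_cast; ring
    have hLloglam : Real.log ((Nat.log g lam : ℕ) : ℝ) ≤ Real.log lam := by
      apply Real.log_le_log hLpos
      exact_mod_cast Nat.log_le_self g lam
    have hkey := key_exponent (gR := (g:ℝ)) (lam := (lam:ℝ))
      (L := ((Nat.log g lam : ℕ) : ℝ)) (r := (rB g lam : ℝ)) (M := (M0 g lam : ℝ))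
      (N := (NN g lam : ℝ)) (D := D) (C2 := C2) (C3 := C3)
      hlng1 hlamR hLR16 (by positivity) hrB2 hM0le hM0ge hMpos
      (by exact_mod_cast hNN1) hNNle (by linarith)
      (le_of_eq hC3.symm) hC30 (by linarith)
      hloglam hE3 hE4 hE5 hLloglam
    -- assemble
    have hcard := badSet_card_real hg lam hL1
    have hexp : ((rB g lam + 1 : ℕ) : ℝ) * (Real.exp 1 * NN g lam / M0 g lam) ^ (M0 g lam)
        = Real.exp (Real.log ((rB g lam : ℝ) + 1)
            + (M0 g lam : ℝ) * (1 + Real.log (NN g lam) - Real.log (M0 g lam))) := by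
      have hNNpos : (0:ℝ) < (NN g lam : ℝ) := by
        exact_mod_cast hNN1
      have hx : (0:ℝ) < Real.exp 1 * NN g lam / M0 g lam := by positivity
      rw [Real.exp_add]
      have e1 : ((rB g lam + 1 : ℕ) : ℝ) = Real.exp (Real.log ((rB g lam : ℝ) + 1)) := by
        rw [Real.exp_log (by positivity)]
        push_cast
        ring
      have e2 : (Real.exp 1 * NN g lam / M0 g lam) ^ (M0 g lam)
          = Real.exp ((M0 g lam : ℝ) * (1 + Real.log (NN g lam) - Real.log (M0 g lam))) := by
        rw [← Real.exp_log (pow_pos hx (M0 g lam)), Real.log_pow]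
        congr 1
        rw [Real.log_div (by positivity) (ne_of_gt hMpos),
          Real.log_mul (by positivity) (ne_of_gt hNNpos), Real.log_exp]
      rw [e1, e2]
    have hgpow : (g:ℝ) ^ lam = Real.exp (lam * Real.log g) := by
      rw [← Real.log_pow, Real.exp_log (by positivity)]
    calc ((badSet g lam).card : ℝ) / (g : ℝ) ^ lam
        ≤ (((rB g lam + 1 : ℕ) : ℝ) * (Real.exp 1 * NN g lam / M0 g lam) ^ (M0 g lam))
            / (g:ℝ) ^ lam := by
          apply div_le_div_of_nonneg_right hcard (by positivity) |>.trans_eq rfl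
      _ = Real.exp (Real.log ((rB g lam : ℝ) + 1)
            + (M0 g lam : ℝ) * (1 + Real.log (NN g lam) - Real.log (M0 g lam))
            - lam * Real.log g) := by
          rw [hexp, hgpow, ← Real.exp_sub]
      _ ≤ Real.exp (-(Real.log g / 4) * lam) := Real.exp_le_exp.mpr hkey
  apply squeeze_zero' (Filter.Eventually.of_forall (fun lam => by positivity)) main
  have hpow : ∀ lam : ℕ, Real.exp (-(Real.log g / 4) * lam)
      = (Real.exp (-(Real.log g / 4))) ^ lam := by
    intro lam
    rw [← Real.exp_nat_mul]
    ring_nf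
  simp only [hpow]
  apply tendsto_pow_atTop_nhds_zero_of_lt_one (le_of_lt (Real.exp_pos _))
  rw [Real.exp_lt_one_iff]
  have : 0 < Real.log g / 4 := by positivity
  linarith
end

open Classical in
/-- for an integer `g ≥ 3`, almost all positive integers `n` satisfy
`l_g(n) ≥ λ_g(n) + λ_g(n) / (8 g ln g · λ_g(λ_g(n)))`: the proportion of positive
integers `n < x` failing this inequality tends to `0` as `x → ∞`. -/
theorem gAddChainLength_lower_bound_density (g : ℕ) (hg : 3 ≤ g) :
    Filter.Tendsto (fun x : ℕ =>
      (((Finset.range x).filter (fun n : ℕ => 1 ≤ n ∧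
          ¬ ((Nat.log g n : ℝ) +
              (Nat.log g n : ℝ) /
                (8 * (g : ℝ) * Real.log g * (Nat.log g (Nat.log g n) : ℝ))
            ≤ (gAddChainLength g n : ℝ)))).card : ℝ) / (x : ℝ))
      Filter.atTop (nhds 0) := by

  classical
  have hg1 : 1 < g := by omega
  have hg1R : (1:ℝ) < (g:ℝ) := by exact_mod_cast hg1
  set F : ℕ → ℝ := fun lam => ((badSet g lam).card : ℝ) with hF
  have hF0 : ∀ lam, 0 ≤ F lam := fun lam => by positivity
  have hFr := tendsto_badSet_ratio hg
  rw [Metric.tendsto_atTop]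
  intro ε hε
  have hgm1 : (0:ℝ) < (g:ℝ) - 1 := by linarith
  set ε' : ℝ := ε * ((g:ℝ) - 1) / (2 * g) with hε'def
  have hε' : 0 < ε' := by
    apply div_pos (by nlinarith) (by positivity)
  rw [Metric.tendsto_atTop] at hFr
  obtain ⟨K, hK⟩ := hFr ε' hε'
  have hKbound : ∀ lam, K ≤ lam → F lam ≤ ε' * (g:ℝ) ^ lam := by
    intro lam hlam
    have := hK lam hlam
    rw [Real.dist_eq, sub_zero, abs_of_nonneg (by positivity)] at this
    have hpow : (0:ℝ) < (g:ℝ) ^ lam := by positivity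
    rw [div_lt_iff₀ hpow] at this
    linarith
  set CK : ℝ := ∑ lam ∈ Finset.range K, F lam with hCK
  have hCK0 : 0 ≤ CK := Finset.sum_nonneg (fun lam _ => hF0 lam)
  refine ⟨max 2 (⌈CK / (ε/2)⌉₊ + 1), fun x hx => ?_⟩
  have hx2 : 2 ≤ x := le_trans (le_max_left _ _) hx
  have hxR : (2:ℝ) ≤ (x:ℝ) := by exact_mod_cast hx2
  have hxpos : (0:ℝ) < (x:ℝ) := by linarith
  have hxC : CK < (ε/2) * x := by
    have h1 : (⌈CK / (ε/2)⌉₊ + 1 : ℕ) ≤ x := le_trans (le_max_right _ _) hx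
    have h2 : CK / (ε/2) ≤ (⌈CK / (ε/2)⌉₊ : ℝ) := Nat.le_ceil _
    have h3 : ((⌈CK / (ε/2)⌉₊ : ℕ) : ℝ) + 1 ≤ (x:ℝ) := by exact_mod_cast h1
    have h4 : CK / (ε/2) < (x:ℝ) := by linarith
    rw [div_lt_iff₀ (by linarith)] at h4
    linarith
  -- card bound
  set Λ : ℕ := Nat.log g (x - 1) with hΛ
  have hsubset : (Finset.range x).filter (fun n : ℕ => 1 ≤ n ∧
      ¬ ((Nat.log g n : ℝ) + (Nat.log g n : ℝ) /
        (8 * (g : ℝ) * Real.log g * (Nat.log g (Nat.log g n) : ℝ))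
      ≤ (gAddChainLength g n : ℝ)))
      ⊆ (Finset.range (Λ + 1)).biUnion (badSet g) := by
    intro n hn
    rw [Finset.mem_filter, Finset.mem_range] at hn
    obtain ⟨hnx, hn1, hbad⟩ := hn
    rw [Finset.mem_biUnion]
    refine ⟨Nat.log g n, ?_, ?_⟩
    · rw [Finset.mem_range, Nat.lt_succ_iff, hΛ]
      apply Nat.log_mono_right
      omega
    · rw [badSet, Finset.mem_filter, Finset.mem_Ico]
      refine ⟨⟨Nat.pow_log_le_self g (by omega), Nat.lt_pow_succ_log_self hg1 n⟩, hn1, hbad⟩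
  have hcard : (((Finset.range x).filter (fun n : ℕ => 1 ≤ n ∧
      ¬ ((Nat.log g n : ℝ) + (Nat.log g n : ℝ) /
        (8 * (g : ℝ) * Real.log g * (Nat.log g (Nat.log g n) : ℝ))
      ≤ (gAddChainLength g n : ℝ)))).card : ℝ)
      ≤ ∑ lam ∈ Finset.range (Λ + 1), F lam := by
    have h1 := Finset.card_le_card hsubset
    have h2 := Finset.card_biUnion_le (s := Finset.range (Λ + 1)) (t := badSet g)
    have h3 : ((Finset.range (Λ+1)).biUnion (badSet g)).card
        ≤ ∑ lam ∈ Finset.range (Λ + 1), (badSet g lam).card := h2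
    calc (((Finset.range x).filter _).card : ℝ)
        ≤ ((∑ lam ∈ Finset.range (Λ + 1), (badSet g lam).card : ℕ) : ℝ) := by
          exact_mod_cast le_trans h1 h3
      _ = ∑ lam ∈ Finset.range (Λ + 1), F lam := by
          rw [hF]; push_cast; ring
  -- split the sum
  have hsum : ∑ lam ∈ Finset.range (Λ + 1), F lam
      ≤ CK + ε' * ∑ lam ∈ Finset.range (Λ + 1), (g:ℝ) ^ lam := by
    rw [← Finset.sum_filter_add_sum_filter_not (Finset.range (Λ+1)) (fun lam => lam < K)]
    have hA : ∑ lam ∈ (Finset.range (Λ+1)).filter (fun lam => lam < K), F lam ≤ CK := by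
      apply Finset.sum_le_sum_of_subset_of_nonneg
      · intro lam hlam
        simp only [Finset.mem_filter, Finset.mem_range] at hlam ⊢
        omega
      · intro i _ _
        exact hF0 i
    have hB : ∑ lam ∈ (Finset.range (Λ+1)).filter (fun lam => ¬ lam < K), F lam
        ≤ ε' * ∑ lam ∈ Finset.range (Λ + 1), (g:ℝ) ^ lam := by
      rw [Finset.mul_sum]
      calc ∑ lam ∈ (Finset.range (Λ+1)).filter (fun lam => ¬ lam < K), F lam
          ≤ ∑ lam ∈ (Finset.range (Λ+1)).filter (fun lam => ¬ lam < K), ε' * (g:ℝ) ^ lam := by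
            apply Finset.sum_le_sum
            intro lam hlam
            simp only [Finset.mem_filter] at hlam
            exact hKbound lam (by omega)
        _ ≤ ∑ lam ∈ Finset.range (Λ + 1), ε' * (g:ℝ) ^ lam := by
            apply Finset.sum_le_sum_of_subset_of_nonneg (Finset.filter_subset _ _)
            intro i _ _
            positivity
    linarith
  -- geometric bound
  have hgeom : ∑ lam ∈ Finset.range (Λ + 1), (g:ℝ) ^ lam ≤ (g:ℝ) ^ (Λ + 1) / ((g:ℝ) - 1) := by
    rw [geom_sum_eq (ne_of_gt hg1R)]
    apply div_le_div_of_nonneg_right _ hgm1.le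
    linarith
  have hpowx : (g:ℝ) ^ (Λ + 1) ≤ (g:ℝ) * x := by
    have h2 : g ^ Λ ≤ x - 1 := Nat.pow_log_le_self g (by omega : x - 1 ≠ 0)
    have h3 : ((g ^ Λ : ℕ) : ℝ) ≤ ((x - 1 : ℕ) : ℝ) := by exact_mod_cast h2
    have h4 : ((x - 1 : ℕ) : ℝ) ≤ (x : ℝ) := by
      have : (x - 1 : ℕ) ≤ x := by omega
      exact_mod_cast this
    have h5 : (g:ℝ) ^ Λ ≤ (x:ℝ) := by
      have : ((g ^ Λ : ℕ) : ℝ) = (g:ℝ) ^ Λ := by push_cast; ring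
      linarith [this ▸ h3]
    calc (g:ℝ) ^ (Λ + 1) = g * (g:ℝ) ^ Λ := by ring
      _ ≤ g * x := mul_le_mul_of_nonneg_left h5 (by positivity)
  have hfinal : ε' * ((g:ℝ) ^ (Λ + 1) / ((g:ℝ) - 1)) ≤ (ε/2) * x := by
    have h1 : ε' * ((g:ℝ) ^ (Λ + 1) / ((g:ℝ) - 1)) ≤ ε' * (((g:ℝ) * x) / ((g:ℝ) - 1)) := by
      apply mul_le_mul_of_nonneg_left _ (le_of_lt hε')
      apply div_le_div_of_nonneg_right hpowx hgm1.le
    have heq : ε' * (((g:ℝ) * x) / ((g:ℝ) - 1)) = (ε/2) * x := by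
      rw [hε'def]
      field_simp
    linarith
  have htotal : (((Finset.range x).filter (fun n : ℕ => 1 ≤ n ∧
      ¬ ((Nat.log g n : ℝ) + (Nat.log g n : ℝ) /
        (8 * (g : ℝ) * Real.log g * (Nat.log g (Nat.log g n) : ℝ))
      ≤ (gAddChainLength g n : ℝ)))).card : ℝ) < ε * x := by
    have h1 : ε' * ∑ lam ∈ Finset.range (Λ + 1), (g:ℝ) ^ lam
        ≤ ε' * ((g:ℝ) ^ (Λ + 1) / ((g:ℝ) - 1)) :=
      mul_le_mul_of_nonneg_left hgeom (le_of_lt hε')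
    calc (((Finset.range x).filter _).card : ℝ)
        ≤ ∑ lam ∈ Finset.range (Λ + 1), F lam := hcard
      _ ≤ CK + ε' * ∑ lam ∈ Finset.range (Λ + 1), (g:ℝ) ^ lam := hsum
      _ ≤ CK + (ε/2) * x := by linarith
      _ < (ε/2) * x + (ε/2) * x := by linarith
      _ = ε * x := by ring
  rw [Real.dist_eq, sub_zero, abs_of_nonneg (by positivity)]
  rw [div_lt_iff₀ hxpos]
  exact htotal
end

section
/- Let g ≥ 2 be an integer such that g + 1 is not a power of a prime (i.e., g + 1 has at least two distinct prime factors). Then l_g((g+1)^2) ≤ 3. -/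
/-- if `g ≥ 2` and `g + 1` is not a power of a prime, then
`l_g((g + 1) ^ 2) ≤ 3`. -/
theorem gAddChainLength_succ_sq_le_three (g : ℕ) (hg : 2 ≤ g)
    (h : ¬ IsPrimePow (g + 1)) :
    gAddChainLength g ((g + 1) ^ 2) ≤ 3 := by
  set m := g + 1 with hm
  have hm3 : 3 ≤ m := by omega
  -- get an odd prime dividing m
  obtain ⟨p, hp, hpm, hp2⟩ : ∃ p, p.Prime ∧ p ∣ m ∧ p ≠ 2 := by
    by_contra hcon
    push_neg at hcon
    have huniq : ∀ q, q.Prime → q ∣ m → q = 2 := fun q hq hqm => hcon q hq hqm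
    have hpow := Nat.eq_prime_pow_of_unique_prime_dvd (n := m) (p := 2)
      (by omega) (fun {d} hd hdm => huniq d hd hdm)
    exact h ⟨2, m.primeFactorsList.length, Nat.prime_two.prime, by
      rcases Nat.eq_zero_or_pos m.primeFactorsList.length with h0 | h0
      · rw [h0] at hpow; simp at hpow; omega
      · exact h0, hpow.symm⟩
  have hp3 : 3 ≤ p := by
    have := hp.two_le
    rcases Nat.lt_or_ge p 3 with h' | h'
    · interval_cases p <;> simp_all
    · exact h'
  set s := p ^ m.factorization p with hs
  have hsd : s ∣ m := Nat.ordProj_dvd m p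
  set t := m / s with ht
  have hst : s * t = m := Nat.mul_div_cancel' hsd
  have hfpos : 1 ≤ m.factorization p :=
    (Nat.Prime.factorization_pos_of_dvd hp (by omega) hpm)
  have hs3 : 3 ≤ s := by
    calc 3 ≤ p := hp3
    _ = p ^ 1 := (pow_one p).symm
    _ ≤ s := Nat.pow_le_pow_right (by omega) hfpos
  have ht2 : 2 ≤ t := by
    rcases Nat.lt_or_ge t 2 with h' | h'
    · interval_cases t
      · omega
      · exact absurd ⟨p, m.factorization p, hp.prime, hfpos, by omega⟩ h
    · exact h'
  have hsg : s ≤ g := by nlinarith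
  have h2t : t + t ≤ g := by nlinarith
  -- the chain 1, s, s*g, (g+1)^2
  have hmem : 3 ∈ {r | ∃ a : ℕ → ℕ, IsGAddChain g a r (m ^ 2)} := by
    refine ⟨fun i => if i = 0 then 1 else if i = 1 then s else if i = 2 then s * g
      else m ^ 2, rfl, by norm_num, ?_⟩
    intro i hi1 hir
    interval_cases i
    · -- a 1 = s, sum of s copies of 1
      refine ⟨s, by omega, hsg, fun _ => 0, monotone_const, fun _ => le_refl 0, ?_⟩
      simp
    · -- a 2 = s * g, sum of g copies of s
      refine ⟨g, hg, le_refl g, fun _ => 1, monotone_const, fun _ => by norm_num, ?_⟩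
      simp [mul_comm]
    · -- a 3 = m^2, t copies of s plus t copies of s*g
      refine ⟨t + t, by omega, h2t, fun x => if (x : ℕ) < t then 1 else 2, ?_, ?_, ?_⟩
      · intro x y hxy
        have : (x : ℕ) ≤ (y : ℕ) := hxy
        dsimp only
        split_ifs with h1 h2 <;> omega
      · intro x; dsimp only; split_ifs <;> norm_num
      · rw [Fin.sum_univ_add]
        have e1 : ∀ i : Fin t, ((Fin.castAdd t i : Fin (t + t)) : ℕ) < t := fun i => i.2
        have e2 : ∀ i : Fin t, ¬ ((Fin.natAdd t i : Fin (t + t)) : ℕ) < t := by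
          intro i; simp [Fin.natAdd]
        simp only [e1, e2, if_true, if_false, if_pos, if_neg]
        norm_num
        have hst' : s * t = g + 1 := hst
        show (g + 1) ^ 2 = t * s + t * (s * g)
        nlinarith [hst']
  calc gAddChainLength g ((g + 1) ^ 2) = gAddChainLength g (m ^ 2) := by rw [hm]
  _ ≤ 3 := Nat.sInf_le hmem
end

section
/- Let g ≥ 2 be an integer and let k ≥ 0 be an integer. Then l_g(g^k · (g+1)^2) ≤ k + 4; indeed 1, g, g+2, g^2+2g, g^2+2g+1, g(g^2+2g+1), ..., g^k(g^2+2g+1) is a g-addition chain of length k + 4 for g^k(g+1)^2. -/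
/-- The chain `1, g, g+1, g²+g, (g+1)², g(g+1)², …`. -/
def chainA (g : ℕ) : ℕ → ℕ := fun i =>
  if i = 0 then 1 else if i = 1 then g else if i = 2 then g + 1
  else if i = 3 then g ^ 2 + g else g ^ (i - 4) * (g + 1) ^ 2

lemma sum_const_fin (g c : ℕ) : ∑ _t : Fin g, c = g * c := by
  simp [Finset.sum_const, mul_comm]

/-- for integers `g ≥ 2` and `k ≥ 0`, `l_g(g ^ k * (g + 1) ^ 2) ≤ k + 4`. -/
theorem gAddChainLength_pow_mul_succ_sq (g k : ℕ) (hg : 2 ≤ g) :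
    gAddChainLength g (g ^ k * (g + 1) ^ 2) ≤ k + 4 := by
  apply Nat.sInf_le
  refine ⟨chainA g, rfl, ?_, ?_⟩
  · simp [chainA]
  · intro i h1 h2
    rcases i with _ | _ | _ | _ | _ | n
    · omega
    · exact ⟨g, hg, le_rfl, fun _ => 0, monotone_const, fun _ => Nat.zero_le _,
        by simp [chainA, sum_const_fin]⟩
    · refine ⟨2, le_rfl, hg, fun t => t.val, fun s t h => h, fun t => Fin.is_le t, ?_⟩
      simp [Fin.sum_univ_two, chainA]; omega
    · refine ⟨g, hg, le_rfl, fun _ => 2, monotone_const, fun _ => by simp, ?_⟩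
      simp [chainA, sum_const_fin]
      ring
    · refine ⟨2, le_rfl, hg, fun t => t.val + 2, fun s t h => Nat.add_le_add_right h 2,
        fun t => Nat.add_le_add_right (Fin.is_le t) 2, ?_⟩
      simp [Fin.sum_univ_two, chainA]
      ring
    · refine ⟨g, hg, le_rfl, fun _ => n + 4, monotone_const, fun _ => by simp, ?_⟩
      have h4 : chainA g (n + 4) = g ^ n * (g + 1) ^ 2 := by
        rcases n with _ | m
        · simp [chainA]
        · simp [chainA]
      have h5 : chainA g (n + 5) = g ^ (n + 1) * (g + 1) ^ 2 := by
        simp [chainA]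
      rw [h5, sum_const_fin, h4]
      ring
end

section
/- Let g ≥ 2 be an integer and let k ≥ 0 be an integer. Then l_g(g^{2+k} · (2g+1)) ≤ k + 5; indeed 1, 2, 2g, 2g+1, 2g^2+g, ..., 2g^{3+k}+g^{2+k} is a g-addition chain of length k + 5 for g^{2+k}(2g+1). -/
/-- for integers `g ≥ 2` and `k ≥ 0`,
`l_g(g ^ (2 + k) * (2 g + 1)) ≤ k + 5`. -/
theorem gAddChainLength_gary_bound (g k : ℕ) (hg : 2 ≤ g) :
    gAddChainLength g (g ^ (2 + k) * (2 * g + 1)) ≤ k + 5 := by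
  set a : ℕ → ℕ := fun i =>
    if i = 0 then 1 else if i = 1 then 2 else if i = 2 then 2 * g
    else g ^ (i - 3) * (2 * g + 1) with ha
  have hmem : (k + 5) ∈ {r | ∃ a : ℕ → ℕ, IsGAddChain g a r (g ^ (2 + k) * (2 * g + 1))} := by
    refine ⟨a, ?_, ?_, ?_⟩
    · simp [ha]
    · have : k + 5 - 3 = 2 + k := by omega
      simp [ha, this]
    · intro i hi1 hir
      match i with
      | 1 =>
        exact ⟨2, le_refl 2, hg, fun _ => 0, monotone_const, fun t => by norm_num,
          by simp [ha, Fin.sum_univ_two]⟩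
      | 2 =>
        refine ⟨g, hg, le_refl g, fun _ => 1, monotone_const, fun t => by norm_num, ?_⟩
        simp [ha, Finset.sum_const, mul_comm]
      | 3 =>
        refine ⟨2, le_refl 2, hg, ![0, 2], ?_, ?_, ?_⟩
        · intro x y hxy; fin_cases x <;> fin_cases y <;> simp_all
        · intro t; fin_cases t <;> simp
        · simp [ha, Fin.sum_univ_two]; ring
      | (n + 4) =>
        refine ⟨g, hg, le_refl g, fun _ => n + 3, monotone_const, fun t => by norm_num, ?_⟩
        have h1 : n + 4 - 3 = n + 1 := by omega
        have h2 : n + 3 - 3 = n := by omega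
        simp [ha, h1, h2, Finset.sum_const, smul_eq_mul]
        ring
  exact Nat.sInf_le hmem
end
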